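/- arXiv:math/0305170 — 4 statements merged into one kernel-verified Lean document; each statement's English description precedes it below -/
import Mathlib

section
/- Let r > 0, let D ⊆ ℂ be a closed subset, discrete in the subspace topology, such that |z| > r for every z ∈ D. Let d ∈ ℕ, let f : D → ℂ^{d+1} be any map, and let ε > 0. Then there exists an entire function F : ℂ → ℂ such that for every γ ∈ D and every k with 0 ≤ k ≤ d the k-th derivative of F at γ equals the k-th component of f(γ), and |F(z)| ≤ ε for all z ∈ ℂ with |z| ≤ r. -/
open Set Finset

namespace JetAux

lemma deriv_differentiable {H : ℂ → ℂ} (hH : Differentiable ℂ H) :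
    Differentiable ℂ (deriv H) := by
  have h := (hH.contDiff (n := (⊤ : WithTop ℕ∞))).differentiable_iteratedDeriv 1
    (by exact lt_top_iff_ne_top.mpr (by simp))
  simpa [iteratedDeriv_one] using h

lemma iter_add {f g : ℂ → ℂ} (hf : Differentiable ℂ f) (hg : Differentiable ℂ g)
    (k : ℕ) (x : ℂ) :
    iteratedDeriv k (fun z => f z + g z) x = iteratedDeriv k f x + iteratedDeriv k g x := by
  have h := iteratedDerivWithin_add (mem_univ x) uniqueDiffOn_univ
    (hf.contDiff.contDiffAt.contDiffWithinAt (s := univ)) (hg.contDiff.contDiffAt.contDiffWithinAt (s := univ)) (n := k)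
  simpa [iteratedDerivWithin_univ, Pi.add_def] using h

lemma iter_const_mul {f : ℂ → ℂ} (hf : Differentiable ℂ f) (c : ℂ) (k : ℕ) (x : ℂ) :
    iteratedDeriv k (fun z => c * f z) x = c * iteratedDeriv k f x := by
  have h := iteratedDerivWithin_const_mul (mem_univ x) uniqueDiffOn_univ c
    (hf.contDiff.contDiffAt.contDiffWithinAt (s := univ)) (n := k)
  simpa [iteratedDerivWithin_univ] using h

lemma iter_sum {ι : Type*} (t : Finset ι) (h : ι → ℂ → ℂ)
    (hh : ∀ i ∈ t, Differentiable ℂ (h i)) (k : ℕ) (x : ℂ) :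
    iteratedDeriv k (fun z => ∑ i ∈ t, h i z) x = ∑ i ∈ t, iteratedDeriv k (h i) x := by
  classical
  induction t using Finset.induction with
  | empty =>
    have hz : iteratedDeriv k (fun _ : ℂ => (0:ℂ)) = fun _ => 0 := by
      rw [iteratedDeriv_eq_iterate]
      have : deriv (fun _ : ℂ => (0:ℂ)) = fun _ : ℂ => (0:ℂ) := deriv_const' 0
      rw [Function.iterate_fixed this]
    simp [hz]
  | insert a s hnotmem ih =>
    rw [Finset.sum_insert hnotmem]
    have : (fun z => ∑ i ∈ insert a s, h i z) = fun z => h a z + ∑ i ∈ s, h i z := by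
      funext z; rw [Finset.sum_insert hnotmem]
    rw [this, iter_add (hh a (Finset.mem_insert_self a s))
      (Differentiable.fun_sum fun i hi => hh i (Finset.mem_insert_of_mem hi)) k x,
      ih fun i hi => hh i (Finset.mem_insert_of_mem hi)]


/-- If `F z = (z-γ)^(d+1) * H z` with `H` entire, all derivatives of `F` at `γ` up to
order `d` vanish. -/
lemma iter_factor_zero (γ : ℂ) :
    ∀ (d : ℕ) (H : ℂ → ℂ), Differentiable ℂ H → ∀ k ≤ d,
      iteratedDeriv k (fun z => (z - γ) ^ (d + 1) * H z) γ = 0 := by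
  intro d
  induction d with
  | zero =>
    intro H hH k hk
    interval_cases k
    simp
  | succ d ih =>
    intro H hH k hk
    match k with
    | 0 => simp
    | (k + 1) =>
      rw [iteratedDeriv_succ']
      have hder : deriv (fun z => (z - γ) ^ (d + 1 + 1) * H z)
          = fun z => (z - γ) ^ (d + 1) * (((d : ℂ) + 2) * H z + (z - γ) * deriv H z) := by
        funext z
        have h1 : HasDerivAt (fun z : ℂ => (z - γ) ^ (d + 2))
            ((((d:ℕ) + 2 : ℕ) : ℂ) * (z - γ) ^ (d + 1) * 1) z :=
          ((hasDerivAt_id z).sub_const γ).pow (d + 2)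
        have h2 := h1.mul (hH z).hasDerivAt
        rw [show (fun z => (z - γ) ^ (d + 1 + 1) * H z) = (fun z => (z - γ) ^ (d + 2)) * H from rfl, h2.deriv]
        push_cast
        ring
      rw [hder]
      exact ih _ (((differentiable_const _).mul hH).add
        (((differentiable_id.sub_const γ)).mul (deriv_differentiable hH))) k
        (Nat.succ_le_succ_iff.mp hk)

lemma iter_monomial (γ : ℂ) (j : ℕ) : ∀ k : ℕ,
    iteratedDeriv k (fun z : ℂ => (z - γ) ^ j)
      = fun z => (j.descFactorial k : ℂ) * (z - γ) ^ (j - k) := by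
  intro k
  induction k with
  | zero => simp
  | succ k ih =>
    rw [iteratedDeriv_succ, ih]
    funext z
    have h1 : HasDerivAt (fun z : ℂ => (z - γ) ^ (j - k))
        ((((j - k : ℕ)) : ℂ) * (z - γ) ^ (j - k - 1) * 1) z :=
      ((hasDerivAt_id z).sub_const γ).pow (j - k)
    have h2 := h1.const_mul ((j.descFactorial k : ℂ))
    rw [h2.deriv, Nat.descFactorial_succ,
      show j - (k + 1) = j - k - 1 by omega]
    push_cast
    ring

lemma iter_monomial_self (γ : ℂ) (j k : ℕ) :
    iteratedDeriv k (fun z : ℂ => (z - γ) ^ j) γ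
      = if k = j then (k.factorial : ℂ) else 0 := by
  rw [iter_monomial]
  rcases lt_trichotomy k j with h | h | h
  · simp [Nat.sub_ne_zero_of_lt h, (Nat.lt_iff_le_and_ne.mp h).2,
      zero_pow (Nat.sub_ne_zero_of_lt h)]
  · subst h
    simp [Nat.descFactorial_self]
  · simp [Nat.descFactorial_eq_zero_iff_lt.mpr h, h.ne']

/-- Jet of the explicit Taylor-style polynomial. -/
lemma iter_taylor_poly (γ : ℂ) (d : ℕ) (a : ℕ → ℂ) (k : ℕ) (hk : k ≤ d) :
    iteratedDeriv k (fun z => ∑ j ∈ range (d + 1), (a j / (j.factorial : ℂ)) * (z - γ) ^ j) γ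
      = a k := by
  rw [iter_sum _ _ (fun j _ => by
    exact (differentiable_const _).mul ((differentiable_id.sub_const γ).pow j))]
  have : ∀ j ∈ range (d + 1),
      iteratedDeriv k (fun z => (a j / (j.factorial : ℂ)) * (z - γ) ^ j) γ
        = if k = j then a k else 0 := by
    intro j _
    rw [iter_const_mul (f := fun z : ℂ => (z - γ) ^ j)
      (by exact Differentiable.pow (differentiable_id.sub_const γ) j) _ k γ,
      iter_monomial_self]
    rcases eq_or_ne k j with h | h
    · subst h
      simp [div_mul_cancel₀, Nat.cast_ne_zero.mpr (Nat.factorial_ne_zero k)]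
    · simp [h]
  rw [Finset.sum_congr rfl this, Finset.sum_ite_eq (range (d + 1)) k (fun _ => a k)]
  simp [Nat.lt_succ_iff.mpr hk]


lemma iter_poly_eq (P : Polynomial ℂ) (A : Polynomial ℂ) (γ : ℂ) (d : ℕ)
    (hdvd : (Polynomial.X - Polynomial.C γ) ^ (d + 1) ∣ P - A) (k : ℕ) (hk : k ≤ d) :
    iteratedDeriv k (fun z => P.eval z) γ = iteratedDeriv k (fun z => A.eval z) γ := by
  obtain ⟨Q, hQ⟩ := hdvd
  have hfun : (fun z => P.eval z) = fun z => A.eval z + (z - γ) ^ (d + 1) * Q.eval z := by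
    funext z
    have h := congrArg (Polynomial.eval z) hQ
    simp only [Polynomial.eval_sub, Polynomial.eval_mul, Polynomial.eval_pow,
      Polynomial.eval_X, Polynomial.eval_C] at h
    linear_combination h
  rw [hfun, iter_add (f := fun z => A.eval z)
    (g := fun z => (z - γ) ^ (d + 1) * Q.eval z) A.differentiable
    (by exact ((differentiable_id.sub_const γ).pow (d + 1)).mul Q.differentiable) k γ,
    iter_factor_zero γ d _ Q.differentiable k hk, add_zero]

open Polynomial in
theorem core (d : ℕ) (S : Finset ℂ) (γ : ℂ) (hγS : γ ∉ S) (a : ℕ → ℂ)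
    (ρ ε : ℝ) (hρ : 0 ≤ ρ) (hργ : ρ < ‖γ‖) (hε : 0 < ε) :
    ∃ F : ℂ → ℂ, Differentiable ℂ F ∧ (∀ k ≤ d, iteratedDeriv k F γ = a k) ∧
      (∀ s ∈ S, ∀ k ≤ d, iteratedDeriv k F s = 0) ∧
      (∀ z : ℂ, ‖z‖ ≤ ρ → ‖F z‖ ≤ ε) := by
  classical
  have hγnorm : (0 : ℝ) < ‖γ‖ := lt_of_le_of_lt hρ hργ
  have hγ0 : γ ≠ 0 := norm_pos_iff.mp hγnorm
  set g : Polynomial ℂ := ∏ s ∈ S, (X - C s) ^ (d + 1) with hg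
  clear_value g
  set c : ℂ := g.eval γ with hcdef
  clear_value c
  have hc : c ≠ 0 := by
    rw [hcdef, hg, eval_prod]
    apply Finset.prod_ne_zero_iff.mpr
    intro s hs
    simp only [eval_pow, eval_sub, eval_X, eval_C]
    exact pow_ne_zero _ (sub_ne_zero.mpr fun h => hγS (h ▸ hs))
  set A : Polynomial ℂ := ∑ j ∈ Finset.range (d + 1),
    C (a j / (j.factorial : ℂ)) * (X - C γ) ^ j with hA
  clear_value A
  have hAeval : ∀ z : ℂ, A.eval z
      = ∑ j ∈ Finset.range (d + 1), (a j / (j.factorial : ℂ)) * (z - γ) ^ j := by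
    intro z
    rw [hA, eval_finset_sum]
    simp [eval_mul, eval_pow, eval_sub]
  set t : ℝ := ρ / ‖γ‖ with ht
  clear_value t
  have ht0 : 0 ≤ t := by rw [ht]; exact div_nonneg hρ hγnorm.le
  have ht1 : t < 1 := by rw [ht]; exact (div_lt_one hγnorm).mpr hργ
  set GB : ℝ := ∏ s ∈ S, (ρ + ‖s‖) ^ (d + 1) with hGB
  clear_value GB
  have hGB0 : 0 ≤ GB := by
    rw [hGB]
    exact Finset.prod_nonneg fun s _ => pow_nonneg (by positivity) _
  set AB : ℝ := ∑ j ∈ Finset.range (d + 1),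
    ‖a j‖ / (j.factorial : ℝ) * (ρ + ‖γ‖) ^ j with hAB
  clear_value AB
  have hAB0 : 0 ≤ AB := by
    rw [hAB]
    exact Finset.sum_nonneg fun j _ => by positivity
  set WB : ℝ := ‖c‖⁻¹ * (GB + ‖c‖) with hWB
  clear_value WB
  have hWB0 : 0 ≤ WB := by
    rw [hWB]
    exact mul_nonneg (inv_nonneg.mpr (norm_nonneg _)) (add_nonneg hGB0 (norm_nonneg _))
  set VB : ℝ := ‖c‖⁻¹ * ∑ i ∈ Finset.range (d + 1), WB ^ i with hVB
  clear_value VB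
  have hVB0 : 0 ≤ VB := by
    rw [hVB]
    exact mul_nonneg (inv_nonneg.mpr (norm_nonneg _))
      (Finset.sum_nonneg fun i _ => pow_nonneg hWB0 i)
  set CC : ℝ := AB * GB * VB with hCC
  clear_value CC
  have hgbound : ∀ z : ℂ, ‖z‖ ≤ ρ → ‖g.eval z‖ ≤ GB := by
    intro z hz
    rw [hg, eval_prod, hGB, norm_prod]
    apply Finset.prod_le_prod (fun s _ => norm_nonneg _)
    intro s _
    simp only [eval_pow, eval_sub, eval_X, eval_C, norm_pow]
    apply pow_le_pow_left₀ (norm_nonneg _)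
    exact (norm_sub_le z s).trans (by gcongr)
  have hAbound : ∀ z : ℂ, ‖z‖ ≤ ρ → ‖A.eval z‖ ≤ AB := by
    intro z hz
    rw [hAeval, hAB]
    refine (norm_sum_le _ _).trans (Finset.sum_le_sum fun j _ => ?_)
    rw [norm_mul, norm_div, norm_pow]
    gcongr
    · exact le_of_eq (by simp)
    · exact (norm_sub_le z γ).trans (by gcongr)
  have key : ∀ M : ℕ, ∃ F : ℂ → ℂ, Differentiable ℂ F ∧
      (∀ k ≤ d, iteratedDeriv k F γ = a k) ∧
      (∀ s ∈ S, ∀ k ≤ d, iteratedDeriv k F s = 0) ∧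
      (∀ z : ℂ, ‖z‖ ≤ ρ → ‖F z‖ ≤ CC * t ^ M) := by
    intro M
    set q : Polynomial ℂ := (C γ⁻¹ * X) ^ M with hq
    clear_value q
    set u : Polynomial ℂ := g * q with hu
    clear_value u
    have huγ : u.eval γ = c := by
      rw [hu, eval_mul, hq]
      simp [inv_mul_cancel₀ hγ0, ← hcdef]
    set nn : Polynomial ℂ := u - C c with hnn
    clear_value nn
    set w : Polynomial ℂ := -(C c⁻¹ * nn) with hw
    clear_value w
    set G : Polynomial ℂ := ∑ i ∈ Finset.range (d + 1), w ^ i with hGdef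
    clear_value G
    set v : Polynomial ℂ := C c⁻¹ * G with hv
    clear_value v
    have h1 : C c * C c⁻¹ = (1 : Polynomial ℂ) := by
      rw [← C_mul, mul_inv_cancel₀ hc, C_1]
    have hu' : u = C c + nn := by rw [hnn]; ring
    have huv : u * v = 1 - w ^ (d + 1) := by
      have h2 := geom_sum_mul w (d + 1)
      rw [← hGdef] at h2
      rw [hu', hv]
      linear_combination G * h1 - h2 + G * hw
    have hnγ : nn.eval γ = 0 := by
      rw [hnn]; simp [huγ]
    have hdvd_w : (X - C γ) ^ (d + 1) ∣ w ^ (d + 1) := by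
      apply pow_dvd_pow_of_dvd
      rw [hw]
      exact (dvd_neg).mpr ((dvd_iff_isRoot.mpr hnγ).mul_left _)
    set P : Polynomial ℂ := A * (u * v) with hP
    clear_value P
    have hPA : (X - C γ) ^ (d + 1) ∣ P - A := by
      have hPA' : P - A = -(A * w ^ (d + 1)) := by rw [hP, huv]; ring
      rw [hPA']
      exact dvd_neg.mpr (hdvd_w.mul_left A)
    refine ⟨fun z => P.eval z, P.differentiable, ?_, ?_, ?_⟩
    · intro k hk
      rw [iter_poly_eq P A γ d hPA k hk]
      have : (fun z => A.eval z) = fun z =>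
          ∑ j ∈ Finset.range (d + 1), (a j / (j.factorial : ℂ)) * (z - γ) ^ j :=
        funext hAeval
      rw [this]
      exact iter_taylor_poly γ d a k hk
    · intro s hs k hk
      have hdvd : (X - C s) ^ (d + 1) ∣ P := by
        have h3 : (X - C s) ^ (d + 1) ∣ g := by
          rw [hg]
          exact Finset.dvd_prod_of_mem _ hs
        have h4 : g ∣ P := by
          rw [hP, hu]
          exact (dvd_mul_right g q).trans ((dvd_mul_right (g * q) v).trans
            (dvd_mul_left ((g * q) * v) A))
        exact h3.trans h4
      obtain ⟨Qs, hQs⟩ := hdvd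
      have hfun : (fun z => P.eval z) = fun z => (z - s) ^ (d + 1) * Qs.eval z := by
        funext z
        rw [hQs]
        simp [eval_mul, eval_pow, eval_sub]
      rw [hfun]
      exact iter_factor_zero s d _ Qs.differentiable k hk
    · intro z hz
      have hqz : ‖q.eval z‖ ≤ t ^ M := by
        rw [hq]
        simp only [eval_pow, eval_mul, eval_C, eval_X, norm_pow, norm_mul, norm_inv]
        apply pow_le_pow_left₀ (by positivity)
        calc ‖γ‖⁻¹ * ‖z‖ ≤ ‖γ‖⁻¹ * ρ := by gcongr
          _ = t := by rw [ht]; field_simp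
      have htM1 : t ^ M ≤ 1 := pow_le_one₀ ht0 ht1.le
      have huz : ‖u.eval z‖ ≤ GB * t ^ M := by
        rw [hu, eval_mul, norm_mul]
        exact mul_le_mul (hgbound z hz) hqz (norm_nonneg _) hGB0
      have huz1 : ‖u.eval z‖ ≤ GB :=
        huz.trans (mul_le_of_le_one_right hGB0 htM1)
      have hnz : ‖nn.eval z‖ ≤ GB + ‖c‖ := by
        rw [hnn, eval_sub, eval_C]
        exact (norm_sub_le _ _).trans (by gcongr)
      have hwz : ‖w.eval z‖ ≤ WB := by
        rw [hw, hWB]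
        simp only [eval_neg, eval_mul, eval_C, norm_neg, norm_mul, norm_inv]
        gcongr
      have hvz : ‖v.eval z‖ ≤ VB := by
        rw [hv, hVB, eval_mul, norm_mul, eval_C, norm_inv, hGdef, eval_finset_sum]
        gcongr
        refine (norm_sum_le _ _).trans (Finset.sum_le_sum fun i _ => ?_)
        simp only [eval_pow, norm_pow]
        exact pow_le_pow_left₀ (norm_nonneg _) hwz i
      calc ‖P.eval z‖ = ‖A.eval z‖ * (‖u.eval z‖ * ‖v.eval z‖) := by
            rw [hP, eval_mul, eval_mul, norm_mul, norm_mul]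
        _ ≤ AB * ((GB * t ^ M) * VB) := by
            apply mul_le_mul (hAbound z hz) _ (by positivity) hAB0
            exact mul_le_mul huz hvz (norm_nonneg _)
              (mul_nonneg hGB0 (pow_nonneg ht0 M))
        _ = CC * t ^ M := by rw [hCC]; ring
  have hlim : Filter.Tendsto (fun M : ℕ => CC * t ^ M) Filter.atTop (nhds 0) := by
    have := (tendsto_pow_atTop_nhds_zero_of_lt_one ht0 ht1).const_mul CC
    simpa using this
  obtain ⟨M, hM⟩ := (hlim.eventually (gt_mem_nhds hε)).exists
  obtain ⟨F, h1', h2', h3', h4'⟩ := key M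
  exact ⟨F, h1', h2', h3', fun z hz => (h4' z hz).trans hM.le⟩

/-- Cauchy-type estimate: a bound for an entire function on a slightly larger ball bounds
its derivative. -/
lemma deriv_bound {f : ℂ → ℂ} (hf : Differentiable ℂ f) {R M : ℝ}
    (hM : ∀ w : ℂ, ‖w‖ ≤ R + 1 → ‖f w‖ ≤ M) {z : ℂ} (hz : ‖z‖ ≤ R) :
    ‖deriv f z‖ ≤ M := by
  have h1 : Complex.cderiv 1 f z = deriv f z :=
    Complex.cderiv_eq_deriv isOpen_univ hf.differentiableOn one_pos (Set.subset_univ _)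
  rw [← h1]
  have h2 : ∀ w ∈ Metric.sphere z 1, ‖f w‖ ≤ M := by
    intro w hw
    apply hM
    have : dist w z = 1 := Metric.mem_sphere.mp hw
    have hd : ‖w - z‖ = 1 := by rw [← dist_eq_norm]; exact this
    calc ‖w‖ ≤ ‖z‖ + ‖w - z‖ := norm_le_norm_add_norm_sub' w z
      _ = ‖z‖ + 1 := by rw [hd]
      _ ≤ R + 1 := by gcongr
  simpa using Complex.norm_cderiv_le one_pos h2

/-- A summable locally-uniform bound on every ball. -/
def NiceBd (Fn : ℕ → ℂ → ℂ) : Prop :=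
  ∀ R : ℝ, ∃ u : ℕ → ℝ, Summable u ∧ ∀ n, ∀ z : ℂ, ‖z‖ ≤ R → ‖Fn n z‖ ≤ u n

lemma niceBd_deriv {Fn : ℕ → ℂ → ℂ} (hdiff : ∀ n, Differentiable ℂ (Fn n))
    (hbd : NiceBd Fn) : NiceBd (fun n => deriv (Fn n)) := by
  intro R
  obtain ⟨u, hu, hle⟩ := hbd (R + 1)
  exact ⟨u, hu, fun n z hz => deriv_bound (hdiff n) (fun w hw => hle n w hw) hz⟩

lemma tsum_differentiable {Fn : ℕ → ℂ → ℂ} (hdiff : ∀ n, Differentiable ℂ (Fn n))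
    (hbd : NiceBd Fn) : Differentiable ℂ (fun z => ∑' n, Fn n z) := by
  intro z
  obtain ⟨u, hu, hle⟩ := hbd (‖z‖ + 1)
  have hd := Complex.differentiableOn_tsum_of_summable_norm hu
    (fun n => (hdiff n).differentiableOn) (Metric.isOpen_ball (x := (0:ℂ)) (ε := ‖z‖ + 1))
    (fun n w hw => hle n w (by
      simpa [Complex.dist_eq, dist_zero_right] using (Metric.mem_ball.mp hw).le))
  have hz : z ∈ Metric.ball (0:ℂ) (‖z‖ + 1) := by
    simp [Metric.mem_ball, dist_zero_right]
  exact (hd.differentiableAt (Metric.isOpen_ball.mem_nhds hz)).differentiableWithinAt.differentiableAt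
    (Filter.univ_mem)

lemma tsum_summable_at {Fn : ℕ → ℂ → ℂ} (hbd : NiceBd Fn) (z : ℂ) :
    Summable (fun n => Fn n z) := by
  obtain ⟨u, hu, hle⟩ := hbd ‖z‖
  exact Summable.of_norm_bounded hu (fun n => hle n z le_rfl)

lemma tsum_deriv_eq {Fn : ℕ → ℂ → ℂ} (hdiff : ∀ n, Differentiable ℂ (Fn n))
    (hbd : NiceBd Fn) :
    deriv (fun z => ∑' n, Fn n z) = fun z => ∑' n, deriv (Fn n) z := by
  funext z
  obtain ⟨u, hu, hle⟩ := hbd (‖z‖ + 1)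
  have hz : z ∈ Metric.ball (0:ℂ) (‖z‖ + 1) := by
    simp [Metric.mem_ball, dist_zero_right]
  have h := Complex.hasSum_deriv_of_summable_norm hu
    (fun n => (hdiff n).differentiableOn) (Metric.isOpen_ball (x := (0:ℂ)) (ε := ‖z‖ + 1))
    (fun n w hw => hle n w (by
      simpa [Complex.dist_eq, dist_zero_right] using (Metric.mem_ball.mp hw).le)) hz
  exact h.tsum_eq.symm

lemma hasSum_iteratedDeriv :
    ∀ (k : ℕ) (Fn : ℕ → ℂ → ℂ), (∀ n, Differentiable ℂ (Fn n)) → NiceBd Fn →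
    ∀ z : ℂ, HasSum (fun n => iteratedDeriv k (Fn n) z)
      (iteratedDeriv k (fun w => ∑' n, Fn n w) z) := by
  intro k
  induction k with
  | zero =>
    intro Fn hdiff hbd z
    simpa [iteratedDeriv_zero] using (tsum_summable_at hbd z).hasSum
  | succ k ih =>
    intro Fn hdiff hbd z
    have h1 : ∀ n : ℕ, iteratedDeriv (k + 1) (Fn n) = iteratedDeriv k (deriv (Fn n)) :=
      fun n => iteratedDeriv_succ' ..
    have h2 : iteratedDeriv (k + 1) (fun w => ∑' n, Fn n w)
        = iteratedDeriv k (fun w => ∑' n, deriv (Fn n) w) := by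
      rw [iteratedDeriv_succ', tsum_deriv_eq hdiff hbd]
    simp only [h1, h2]
    exact ih (fun n => deriv (Fn n)) (fun n => deriv_differentiable (hdiff n))
      (niceBd_deriv hdiff hbd) z


noncomputable def pickF (d : ℕ) (S : Finset ℂ) (γ : ℂ) (a : ℕ → ℂ) (ρ ε : ℝ) : ℂ → ℂ :=
  if h : γ ∉ S ∧ 0 ≤ ρ ∧ ρ < ‖γ‖ ∧ 0 < ε then
    (core d S γ h.1 a ρ ε h.2.1 h.2.2.1 h.2.2.2).choose
  else fun _ => 0

lemma pickF_diff (d : ℕ) (S : Finset ℂ) (γ : ℂ) (a : ℕ → ℂ) (ρ ε : ℝ) :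
    Differentiable ℂ (pickF d S γ a ρ ε) := by
  rw [pickF]
  split
  · next h => exact (core d S γ h.1 a ρ ε h.2.1 h.2.2.1 h.2.2.2).choose_spec.1
  · exact differentiable_const 0

lemma pickF_spec (d : ℕ) (S : Finset ℂ) (γ : ℂ) (a : ℕ → ℂ) (ρ ε : ℝ)
    (h : γ ∉ S ∧ 0 ≤ ρ ∧ ρ < ‖γ‖ ∧ 0 < ε) :
    (∀ k ≤ d, iteratedDeriv k (pickF d S γ a ρ ε) γ = a k) ∧
    (∀ s ∈ S, ∀ k ≤ d, iteratedDeriv k (pickF d S γ a ρ ε) s = 0) ∧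
    (∀ z : ℂ, ‖z‖ ≤ ρ → ‖pickF d S γ a ρ ε z‖ ≤ ε) := by
  rw [pickF, dif_pos h]
  exact (core d S γ h.1 a ρ ε h.2.1 h.2.2.1 h.2.2.2).choose_spec.2

noncomputable def buildS (d : ℕ) (γf : ℕ → ℂ) (af : ℕ → ℕ → ℂ) (r ε : ℝ) : ℕ → ℂ → ℂ
  | 0 => fun _ => 0
  | n + 1 => fun z => buildS d γf af r ε n z +
      pickF d ((Finset.range n).image γf) (γf n)
        (fun k => af n k - iteratedDeriv k (buildS d γf af r ε n) (γf n))
        (max r (‖γf n‖ - 1)) (ε / 2 / 2 ^ n) z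

noncomputable def FF (d : ℕ) (γf : ℕ → ℂ) (af : ℕ → ℕ → ℂ) (r ε : ℝ) (n : ℕ) : ℂ → ℂ :=
  pickF d ((Finset.range n).image γf) (γf n)
    (fun k => af n k - iteratedDeriv k (buildS d γf af r ε n) (γf n))
    (max r (‖γf n‖ - 1)) (ε / 2 / 2 ^ n)

lemma buildS_succ (d : ℕ) (γf : ℕ → ℂ) (af : ℕ → ℕ → ℂ) (r ε : ℝ) (n : ℕ) :
    buildS d γf af r ε (n + 1) = fun z => buildS d γf af r ε n z + FF d γf af r ε n z :=
  rfl

lemma FF_diff (d : ℕ) (γf : ℕ → ℂ) (af : ℕ → ℕ → ℂ) (r ε : ℝ) (n : ℕ) :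
    Differentiable ℂ (FF d γf af r ε n) := pickF_diff _ _ _ _ _ _

lemma buildS_diff (d : ℕ) (γf : ℕ → ℂ) (af : ℕ → ℕ → ℂ) (r ε : ℝ) :
    ∀ n, Differentiable ℂ (buildS d γf af r ε n)
  | 0 => differentiable_const 0
  | n + 1 => by
    rw [buildS_succ]
    exact fun z => ((buildS_diff d γf af r ε n z).add (FF_diff d γf af r ε n z))

lemma buildS_eq_sum (d : ℕ) (γf : ℕ → ℂ) (af : ℕ → ℕ → ℂ) (r ε : ℝ) :
    ∀ n, buildS d γf af r ε n = fun z => ∑ m ∈ Finset.range n, FF d γf af r ε m z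
  | 0 => by funext z; simp [buildS]
  | n + 1 => by
    funext z
    rw [buildS_succ, buildS_eq_sum d γf af r ε n, Finset.sum_range_succ]


section Infinite

variable {d : ℕ} {γf : ℕ → ℂ} {af : ℕ → ℕ → ℂ} {r ε : ℝ}

lemma pick_cond (hinj : Function.Injective γf) (hr : 0 < r) (hγr : ∀ m, r < ‖γf m‖)
    (hε : 0 < ε) (n : ℕ) :
    γf n ∉ (Finset.range n).image γf ∧ 0 ≤ max r (‖γf n‖ - 1) ∧
      max r (‖γf n‖ - 1) < ‖γf n‖ ∧ 0 < ε / 2 / 2 ^ n := by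
  refine ⟨?_, le_max_of_le_left hr.le, max_lt (hγr n) (by linarith), by positivity⟩
  intro hmem
  obtain ⟨m, hm, hme⟩ := Finset.mem_image.mp hmem
  exact absurd (hinj hme) (Finset.mem_range.mp hm).ne

lemma FF_jet (hinj : Function.Injective γf) (hr : 0 < r) (hγr : ∀ m, r < ‖γf m‖)
    (hε : 0 < ε) (n k : ℕ) (hk : k ≤ d) :
    iteratedDeriv k (FF d γf af r ε n) (γf n)
      = af n k - iteratedDeriv k (buildS d γf af r ε n) (γf n) :=
  (pickF_spec _ _ _ _ _ _ (pick_cond hinj hr hγr hε n)).1 k hk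

lemma FF_zero (hinj : Function.Injective γf) (hr : 0 < r) (hγr : ∀ m, r < ‖γf m‖)
    (hε : 0 < ε) {j n k : ℕ} (hjn : j < n) (hk : k ≤ d) :
    iteratedDeriv k (FF d γf af r ε n) (γf j) = 0 :=
  (pickF_spec _ _ _ _ _ _ (pick_cond hinj hr hγr hε n)).2.1 (γf j)
    (Finset.mem_image.mpr ⟨j, Finset.mem_range.mpr hjn, rfl⟩) k hk

lemma FF_bound (hinj : Function.Injective γf) (hr : 0 < r) (hγr : ∀ m, r < ‖γf m‖)
    (hε : 0 < ε) (n : ℕ) {z : ℂ} (hz : ‖z‖ ≤ max r (‖γf n‖ - 1)) :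
    ‖FF d γf af r ε n z‖ ≤ ε / 2 / 2 ^ n :=
  (pickF_spec _ _ _ _ _ _ (pick_cond hinj hr hγr hε n)).2.2 z hz

theorem infinite_case (d : ℕ) (γf : ℕ → ℂ) (af : ℕ → ℕ → ℂ) (r ε : ℝ)
    (hr : 0 < r) (hε : 0 < ε) (hinj : Function.Injective γf)
    (hγr : ∀ m, r < ‖γf m‖)
    (htend : Filter.Tendsto (fun n => ‖γf n‖) Filter.atTop Filter.atTop) :
    ∃ F : ℂ → ℂ, Differentiable ℂ F ∧
      (∀ n, ∀ k ≤ d, iteratedDeriv k F (γf n) = af n k) ∧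
      ∀ z : ℂ, ‖z‖ ≤ r → ‖F z‖ ≤ ε := by
  classical
  set Fn : ℕ → ℂ → ℂ := FF d γf af r ε with hFn
  have hdiff : ∀ n, Differentiable ℂ (Fn n) := fun n => FF_diff d γf af r ε n
  have hbd : NiceBd Fn := by
    intro R
    obtain ⟨N, hN⟩ := Filter.eventually_atTop.mp (htend.eventually_ge_atTop (R + 1))
    choose CB hCB using fun n => (isCompact_closedBall (0:ℂ) R).exists_bound_of_continuousOn
      (((hdiff n).continuous).continuousOn (s := Metric.closedBall 0 R))
    refine ⟨fun n => ε / 2 / 2 ^ n + (if n < N then max 0 (CB n) else 0),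
      (summable_geometric_two' ε).add
        (summable_of_ne_finset_zero (s := Finset.range N) fun n hn => by
          rw [if_neg (by simpa using hn)]), ?_⟩
    intro n z hz
    show ‖Fn n z‖ ≤ ε / 2 / 2 ^ n + (if n < N then max 0 (CB n) else 0)
    by_cases h : n < N
    · rw [if_pos h]
      have h1 : ‖Fn n z‖ ≤ CB n :=
        hCB n z (by simpa [Metric.mem_closedBall, dist_zero_right] using hz)
      have h2 : (0:ℝ) ≤ ε / 2 / 2 ^ n := by positivity
      have h3 : CB n ≤ max 0 (CB n) := le_max_right _ _
      linarith
    · rw [if_neg h, add_zero]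
      push_neg at h
      apply FF_bound hinj hr hγr hε n
      have h4 : R + 1 ≤ ‖γf n‖ := hN n h
      calc ‖z‖ ≤ R := hz
        _ ≤ ‖γf n‖ - 1 := by linarith
        _ ≤ max r (‖γf n‖ - 1) := le_max_right _ _
  refine ⟨fun z => ∑' n, Fn n z, tsum_differentiable hdiff hbd, ?_, ?_⟩
  · intro j k hk
    have hs := hasSum_iteratedDeriv k Fn hdiff hbd (γf j)
    rw [← hs.tsum_eq]
    rw [tsum_eq_sum (s := Finset.range (j + 1)) (f := fun n => iteratedDeriv k (Fn n) (γf j))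
      (fun n hn => FF_zero hinj hr hγr hε (Nat.lt_of_succ_le
        (Nat.succ_le_of_lt (by simpa [Nat.lt_succ_iff, not_le] using
          (Finset.mem_range.not.mp hn)))) hk)]
    have h2 : ∑ m ∈ Finset.range (j + 1), iteratedDeriv k (Fn m) (γf j)
        = iteratedDeriv k (buildS d γf af r ε (j + 1)) (γf j) := by
      rw [buildS_eq_sum]
      exact (iter_sum (Finset.range (j + 1)) (fun m => Fn m)
        (fun m _ => hdiff m) k (γf j)).symm
    rw [h2, buildS_succ, iter_add (buildS_diff d γf af r ε j) (FF_diff d γf af r ε j) k (γf j),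
      FF_jet hinj hr hγr hε j k hk]
    ring
  · intro z hz
    have hb : ∀ n, ‖Fn n z‖ ≤ ε / 2 / 2 ^ n := fun n =>
      FF_bound hinj hr hγr hε n (hz.trans (le_max_left _ _))
    have hsum : Summable (fun n => ‖Fn n z‖) :=
      Summable.of_nonneg_of_le (fun n => norm_nonneg _) hb (summable_geometric_two' ε)
    calc ‖∑' n, Fn n z‖ ≤ ∑' n, ‖Fn n z‖ := norm_tsum_le_tsum_norm hsum
      _ ≤ ∑' n, ε / 2 / 2 ^ n := Summable.tsum_le_tsum hb hsum (summable_geometric_two' ε)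
      _ = ε := tsum_geometric_two' ε

end Infinite


theorem finite_case (d : ℕ) (T : Finset ℂ) (r ε : ℝ) (hr : 0 < r) (hε : 0 < ε)
    (hTr : ∀ x ∈ T, r < ‖x‖) (af : ℂ → ℕ → ℂ) :
    ∃ F : ℂ → ℂ, Differentiable ℂ F ∧
      (∀ x ∈ T, ∀ k ≤ d, iteratedDeriv k F x = af x k) ∧
      ∀ z : ℂ, ‖z‖ ≤ r → ‖F z‖ ≤ ε := by
  classical
  have hε' : (0:ℝ) < ε / (T.card + 1) := by positivity
  have hex : ∀ x ∈ T, ∃ F : ℂ → ℂ, Differentiable ℂ F ∧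
      (∀ k ≤ d, iteratedDeriv k F x = af x k) ∧
      (∀ s ∈ T.erase x, ∀ k ≤ d, iteratedDeriv k F s = 0) ∧
      (∀ z : ℂ, ‖z‖ ≤ r → ‖F z‖ ≤ ε / (T.card + 1)) :=
    fun x hx => core d (T.erase x) x (Finset.notMem_erase x T) (af x) r
      (ε / (T.card + 1)) hr.le (hTr x hx) hε'
  choose! Fx h1 h2 h3 h4 using hex
  refine ⟨fun z => ∑ x ∈ T, Fx x z, Differentiable.fun_sum fun x hx => h1 x hx, ?_, ?_⟩
  · intro x hx k hk
    rw [iter_sum T (fun x => Fx x) (fun y hy => h1 y hy) k x]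
    rw [Finset.sum_eq_single_of_mem x hx]
    · exact h2 x hx k hk
    · intro y hy hyx
      exact h3 y hy x (Finset.mem_erase.mpr ⟨hyx.symm, hx⟩) k hk
  · intro z hz
    calc ‖∑ x ∈ T, Fx x z‖ ≤ ∑ x ∈ T, ‖Fx x z‖ := norm_sum_le _ _
      _ ≤ ∑ _x ∈ T, ε / (T.card + 1) := Finset.sum_le_sum fun x hx => h4 x hx z hz
      _ = T.card * (ε / (T.card + 1)) := by rw [Finset.sum_const, nsmul_eq_mul]
      _ ≤ (T.card + 1) * (ε / (T.card + 1)) := by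
          apply mul_le_mul_of_nonneg_right (by linarith) hε'.le
      _ = ε := by field_simp
end JetAux

/-- Let `D ⊆ ℂ` be a closed discrete subset with `|z| > r` for all `z ∈ D`, let `d ∈ ℕ`,
`f : D → ℂ^{d+1}` and `ε > 0`. Then there is an entire function `F` whose `d`-jet at each
point `γ ∈ D` equals `f(γ)` and with `|F| ≤ ε` on the disk `{|z| ≤ r}`. -/
theorem exists_entire_with_prescribed_jets_small_on_disk (r : ℝ) (hr : 0 < r)
    (D : Set ℂ) (hDclosed : IsClosed D) (hDdisc : DiscreteTopology D)
    (hDr : ∀ z ∈ D, r < ‖z‖) (d : ℕ) (f : D → Fin (d + 1) → ℂ) (ε : ℝ) (hε : 0 < ε) :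
    ∃ F : ℂ → ℂ, Differentiable ℂ F ∧
      (∀ (γ : D) (k : Fin (d + 1)), iteratedDeriv k.1 F (γ : ℂ) = f γ k) ∧
      ∀ z : ℂ, ‖z‖ ≤ r → ‖F z‖ ≤ ε := by
  classical
  by_cases hfin : D.Finite
  · -- finite case
    set T : Finset ℂ := hfin.toFinset with hT
    have hTr : ∀ x ∈ T, r < ‖x‖ := fun x hx => hDr x (hfin.mem_toFinset.mp hx)
    set af : ℂ → ℕ → ℂ := fun x k =>
      if h : x ∈ D ∧ k < d + 1 then f ⟨x, h.1⟩ ⟨k, h.2⟩ else 0 with haf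
    obtain ⟨F, hF1, hF2, hF3⟩ := JetAux.finite_case d T r ε hr hε hTr af
    refine ⟨F, hF1, ?_, hF3⟩
    intro γ k
    have hmem : (γ : ℂ) ∈ T := hfin.mem_toFinset.mpr γ.2
    have := hF2 (γ : ℂ) hmem k.1 (Nat.lt_succ_iff.mp k.isLt)
    rw [this]
    simp only [haf]
    rw [dif_pos (show (γ:ℂ) ∈ D ∧ (k:ℕ) < d + 1 from ⟨γ.2, k.isLt⟩)]
  · -- infinite case
    have hfinball : ∀ R : ℝ, (Metric.closedBall (0:ℂ) R ∩ D).Finite := fun R =>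
      Metric.finite_isBounded_inter_isClosed hDdisc.isDiscrete Metric.isBounded_closedBall hDclosed
    have hcount : D.Countable := by
      have hsub : D ⊆ ⋃ n : ℕ, (Metric.closedBall (0:ℂ) n ∩ D) := by
        intro z hz
        obtain ⟨n, hn⟩ := exists_nat_ge ‖z‖
        exact Set.mem_iUnion.mpr ⟨n, by
          simpa [Metric.mem_closedBall, dist_zero_right] using ⟨hn, hz⟩⟩
      exact Set.Countable.mono hsub (Set.countable_iUnion fun n => (hfinball n).countable)
    haveI : Countable ↑D := hcount.to_subtype
    haveI : Infinite ↑D := (Set.infinite_coe_iff).mpr hfin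
    obtain ⟨dnm⟩ := nonempty_denumerable ↑D
    let e : ℕ ≃ ↑D := (Denumerable.eqv ↑D).symm
    set γf : ℕ → ℂ := fun n => ((e n : ↑D) : ℂ) with hγf
    have hinj : Function.Injective γf := fun a b h => e.injective (Subtype.ext h)
    have hγr : ∀ m, r < ‖γf m‖ := fun m => hDr _ (e m).2
    have htend : Filter.Tendsto (fun n => ‖γf n‖) Filter.atTop Filter.atTop := by
      rw [Filter.tendsto_atTop]
      intro R
      have hbadfin : {n : ℕ | ‖γf n‖ ≤ R}.Finite := by
        apply Set.Finite.subset (Set.Finite.preimage hinj.injOn (hfinball R))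
        intro n hn
        exact Set.mem_preimage.mpr ⟨by
          simpa [Metric.mem_closedBall, dist_zero_right] using hn, (e n).2⟩
      have hev := hbadfin.eventually_cofinite_notMem
      rw [Nat.cofinite_eq_atTop] at hev
      exact hev.mono fun n hn => le_of_not_ge fun hc => hn hc
    set af : ℕ → ℕ → ℂ := fun n k =>
      if h : k < d + 1 then f (e n) ⟨k, h⟩ else 0 with haf
    obtain ⟨F, hF1, hF2, hF3⟩ :=
      JetAux.infinite_case d γf af r ε hr hε hinj hγr htend
    refine ⟨F, hF1, ?_, hF3⟩
    intro γ k
    have hγeq : γf (e.symm γ) = (γ : ℂ) := by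
      rw [hγf]
      simp
    have := hF2 (e.symm γ) k.1 (Nat.lt_succ_iff.mp k.isLt)
    rw [hγeq] at this
    rw [this]
    simp only [haf]
    rw [dif_pos (show (k:ℕ) < d + 1 from k.isLt)]
    simp
end

section
/- Let n ≥ 1. There exists an infinite subset Γ ⊆ ℂⁿ such that for every entire function F : ℂⁿ → ℂ that is not identically zero, the set {γ ∈ Γ : F(γ) = 0} is finite. -/
open Filter Topology

/-- Comparison with a geometric series. -/
lemma my_summable_of_eventually_le_exp_neg {f : ℕ → ℝ}
    (h0 : ∀ ν, 0 ≤ f ν) (h : ∀ᶠ ν in atTop, f ν ≤ Real.exp (-(ν : ℝ))) :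
    Summable f := by
  have hg : Summable (fun ν : ℕ => Real.exp (-(ν : ℝ))) := by
    have hfn : (fun ν : ℕ => Real.exp (-(ν : ℝ))) = fun ν : ℕ => (Real.exp (-1)) ^ ν := by
      funext ν
      rw [← Real.exp_nat_mul]
      norm_num
    rw [hfn]
    exact summable_geometric_of_lt_one (Real.exp_nonneg _)
      (by rw [Real.exp_lt_one_iff]; norm_num)
  refine summable_of_isBigO_nat hg (Asymptotics.IsBigO.of_bound 1 ?_)
  filter_upwards [h] with ν hν
  rw [one_mul, Real.norm_eq_abs, Real.norm_eq_abs, abs_of_nonneg (h0 ν),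
    abs_of_nonneg (Real.exp_nonneg _)]
  exact hν

lemma my_summable_main (a b : ℝ) :
    Summable (fun ν : ℕ => (ν : ℝ) * Real.exp (a + b * (ν : ℝ) ^ 2 - (ν : ℝ) ^ 4)) := by
  apply my_summable_of_eventually_le_exp_neg
  · intro ν; positivity
  · rw [eventually_atTop]
    refine ⟨2 + ⌈|a|⌉₊ + ⌈|b|⌉₊, fun ν hν => ?_⟩
    have hx2 : (2 : ℝ) ≤ (ν : ℝ) := by
      exact_mod_cast le_trans (by omega) hν
    have hxa : |a| ≤ (ν : ℝ) :=
      le_trans (Nat.le_ceil _) (by exact_mod_cast (by omega : ⌈|a|⌉₊ ≤ ν))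
    have hxb : |b| ≤ (ν : ℝ) :=
      le_trans (Nat.le_ceil _) (by exact_mod_cast (by omega : ⌈|b|⌉₊ ≤ ν))
    have ha : a ≤ (ν : ℝ) := (le_abs_self a).trans hxa
    have hb : b ≤ (ν : ℝ) := (le_abs_self b).trans hxb
    have hνe : (ν : ℝ) ≤ Real.exp (ν : ℝ) := by
      have := Real.add_one_le_exp (ν : ℝ)
      linarith
    calc (ν : ℝ) * Real.exp (a + b * (ν : ℝ) ^ 2 - (ν : ℝ) ^ 4)
        ≤ Real.exp (ν : ℝ) * Real.exp (a + b * (ν : ℝ) ^ 2 - (ν : ℝ) ^ 4) :=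
          mul_le_mul_of_nonneg_right hνe (Real.exp_nonneg _)
      _ = Real.exp ((ν : ℝ) + (a + b * (ν : ℝ) ^ 2 - (ν : ℝ) ^ 4)) := (Real.exp_add _ _).symm
      _ ≤ Real.exp (-(ν : ℝ)) := by
          apply Real.exp_le_exp.2
          nlinarith [mul_le_mul_of_nonneg_right hb (sq_nonneg (ν : ℝ)), sq_nonneg (ν : ℝ),
            mul_le_mul_of_nonneg_left hx2 (by positivity : (0:ℝ) ≤ (ν:ℝ)^2),
            mul_le_mul_of_nonneg_left hx2 (by positivity : (0:ℝ) ≤ (ν:ℝ)^3)]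

lemma my_summable_small :
    Summable (fun ν : ℕ => (ν : ℝ) * Real.exp (-(ν : ℝ) ^ 2)) := by
  apply my_summable_of_eventually_le_exp_neg
  · intro ν; positivity
  · rw [eventually_atTop]
    refine ⟨2, fun ν hν => ?_⟩
    have hx2 : (2 : ℝ) ≤ (ν : ℝ) := by exact_mod_cast hν
    have hνe : (ν : ℝ) ≤ Real.exp (ν : ℝ) := by
      have := Real.add_one_le_exp (ν : ℝ)
      linarith
    calc (ν : ℝ) * Real.exp (-(ν : ℝ) ^ 2)
        ≤ Real.exp (ν : ℝ) * Real.exp (-(ν : ℝ) ^ 2) :=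
          mul_le_mul_of_nonneg_right hνe (Real.exp_nonneg _)
      _ = Real.exp ((ν : ℝ) + -(ν : ℝ) ^ 2) := (Real.exp_add _ _).symm
      _ ≤ Real.exp (-(ν : ℝ)) := by
          apply Real.exp_le_exp.2
          nlinarith

/-- One-variable identity theorem for the sequence `1/(m+1)` accumulating at `0`. -/
lemma my_zero_of_zeros {h : ℂ → ℂ} (hd : Differentiable ℂ h) {T : Set ℕ}
    (hT : T.Infinite) (hz : ∀ m ∈ T, h (1 / ((m : ℂ) + 1)) = 0) : ∀ z, h z = 0 := by
  have hA : AnalyticOnNhd ℂ h Set.univ := Complex.analyticOnNhd_univ_iff_differentiable.2 hd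
  have hfreq0 : ∃ᶠ m in atTop, m ∈ T := by
    rw [frequently_atTop]
    intro a
    obtain ⟨b, hbT, hab⟩ := hT.exists_gt a
    exact ⟨b, hab.le, hbT⟩
  have htend : Tendsto (fun m : ℕ => 1 / ((m : ℂ) + 1)) atTop (𝓝[≠] (0 : ℂ)) := by
    rw [tendsto_nhdsWithin_iff]
    constructor
    · have h1 : Tendsto (fun m : ℕ => ((1 / ((m : ℝ) + 1) : ℝ) : ℂ)) atTop (𝓝 (((0:ℝ) : ℂ))) :=
        (Complex.continuous_ofReal.tendsto _).comp tendsto_one_div_add_atTop_nhds_zero_nat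
      have h2 : (fun m : ℕ => 1 / ((m : ℂ) + 1)) = fun m : ℕ => ((1 / ((m : ℝ) + 1) : ℝ) : ℂ) := by
        funext m; push_cast; ring
      rw [h2]
      rw [Complex.ofReal_zero] at h1
      exact h1
    · refine Eventually.of_forall fun m => ?_
      have hne : ((m : ℂ) + 1) ≠ 0 := by
        exact_mod_cast Nat.succ_ne_zero m
      simp only [Set.mem_compl_iff, Set.mem_singleton_iff]
      exact one_div_ne_zero hne
  have hfreq : ∃ᶠ z in 𝓝[≠] (0 : ℂ), h z = 0 :=
    htend.frequently (hfreq0.mono fun m hm => hz m hm)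
  intro z
  exact hA.eqOn_zero_of_preconnected_of_frequently_eq_zero isPreconnected_univ
    (Set.mem_univ 0) hfreq (Set.mem_univ z)

/-- There is an entire curve `ℂ → ℂⁿ` whose values at the points `ν²`, `ν ∈ ℕ`, are dense. -/
lemma my_exists_curve (n : ℕ) :
    ∃ c : ℂ → (Fin n → ℂ), Differentiable ℂ c ∧
      DenseRange (fun ν : ℕ => c ((ν : ℂ) ^ 2)) := by
  classical
  set e : ℕ → (Fin n → ℂ) := TopologicalSpace.denseSeq (Fin n → ℂ) with he_def
  have he : DenseRange e := TopologicalSpace.denseRange_denseSeq _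
  set d : ℕ → (Fin n → ℂ) :=
    fun ν => if ‖e (Nat.unpair ν).1‖ ≤ (ν : ℝ) then e (Nat.unpair ν).1 else 0 with hd_def
  have hd_norm : ∀ ν, ‖d ν‖ ≤ (ν : ℝ) := by
    intro ν
    rw [hd_def]
    dsimp only
    split
    · assumption
    · simp
  set c : ℂ → (Fin n → ℂ) :=
    fun t i => ∑' ν : ℕ, d ν i * Complex.exp (-(t - (ν : ℂ) ^ 2) ^ 2) with hc_def
  -- term bound on balls
  have hterm : ∀ (R : ℝ), 0 ≤ R → ∀ (ν : ℕ) (i : Fin n) (t : ℂ), ‖t‖ ≤ R →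
      ‖d ν i * Complex.exp (-(t - (ν : ℂ) ^ 2) ^ 2)‖
        ≤ (ν : ℝ) * Real.exp (R ^ 2 + (2 * R) * (ν : ℝ) ^ 2 - (ν : ℝ) ^ 4) := by
    intro R hR ν i t ht
    rw [norm_mul]
    have h1 : ‖d ν i‖ ≤ (ν : ℝ) := (norm_le_pi_norm (d ν) i).trans (hd_norm ν)
    have h2 : ‖Complex.exp (-(t - (ν : ℂ) ^ 2) ^ 2)‖
        ≤ Real.exp (R ^ 2 + (2 * R) * (ν : ℝ) ^ 2 - (ν : ℝ) ^ 4) := by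
      rw [Complex.norm_exp]
      apply Real.exp_le_exp.2
      have hre : (-(t - (ν : ℂ) ^ 2) ^ 2).re = t.im ^ 2 - (t.re - (ν : ℝ) ^ 2) ^ 2 := by
        have hν : ((ν : ℂ) ^ 2) = (((ν : ℝ) ^ 2 : ℝ) : ℂ) := by push_cast; ring
        rw [hν]
        simp only [pow_two, Complex.neg_re, Complex.mul_re, Complex.sub_re, Complex.sub_im,
          Complex.ofReal_re, Complex.ofReal_im]
        ring
      rw [hre]
      have htR : ‖t‖ ≤ R := ht
      have hxR : |t.re| ≤ R := le_trans (Complex.abs_re_le_norm t) htR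
      have hyR : |t.im| ≤ R := le_trans (Complex.abs_im_le_norm t) htR
      have h3 : t.re ≤ R := (abs_le.1 hxR).2
      have h4 : t.im ^ 2 ≤ R ^ 2 := sq_le_sq' (abs_le.1 hyR).1 (abs_le.1 hyR).2
      nlinarith [sq_nonneg t.re, mul_le_mul_of_nonneg_right h3 (by positivity : (0:ℝ) ≤ 2 * (ν:ℝ)^2)]
    exact mul_le_mul h1 h2 (norm_nonneg _) (Nat.cast_nonneg ν)
  have hsummR : ∀ R : ℝ, Summable
      (fun ν : ℕ => (ν : ℝ) * Real.exp (R ^ 2 + (2 * R) * (ν : ℝ) ^ 2 - (ν : ℝ) ^ 4)) :=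
    fun R => my_summable_main (R ^ 2) (2 * R)
  -- differentiability
  have hcdiff : Differentiable ℂ c := by
    rw [hc_def]
    apply differentiable_pi.2
    intro i t
    have hball : DifferentiableOn ℂ
        (fun t => ∑' ν : ℕ, d ν i * Complex.exp (-(t - (ν : ℂ) ^ 2) ^ 2))
        (Metric.ball 0 (‖t‖ + 1)) := by
      apply Complex.differentiableOn_tsum_of_summable_norm (hsummR (‖t‖ + 1))
      · intro ν
        apply Differentiable.differentiableOn
        exact ((((differentiable_id.sub_const _).pow 2).neg).cexp).const_mul _
      · exact Metric.isOpen_ball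
      · intro ν w hw
        exact hterm _ (by positivity) ν i w (mem_ball_zero_iff.1 hw).le
    exact hball.differentiableAt (Metric.isOpen_ball.mem_nhds
      (by rw [mem_ball_zero_iff]; linarith))
  -- summability at any point
  have hsum_at : ∀ (t : ℂ) (i : Fin n),
      Summable (fun ν : ℕ => d ν i * Complex.exp (-(t - (ν : ℂ) ^ 2) ^ 2)) := by
    intro t i
    apply Summable.of_norm
    exact Summable.of_nonneg_of_le (fun ν => norm_nonneg _)
      (fun ν => hterm ‖t‖ (norm_nonneg t) ν i t le_rfl) (hsummR ‖t‖)
  set C₀ := ∑' ν : ℕ, (ν : ℝ) * Real.exp (-(ν : ℝ) ^ 2) with hC₀_def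
  have hC₀ : 0 ≤ C₀ := tsum_nonneg fun ν => by positivity
  -- the square-separation inequality
  have hsq : ∀ (μ ν : ℕ), ν ≠ μ → (μ : ℝ) ^ 2 + (ν : ℝ) ^ 2 ≤ ((μ : ℝ) ^ 2 - (ν : ℝ) ^ 2) ^ 2 := by
    intro μ ν hne
    have h1 : (1 : ℝ) ≤ ((μ : ℝ) - (ν : ℝ)) ^ 2 := by
      rcases lt_or_gt_of_ne hne with hlt | hlt
      · have : (ν : ℝ) + 1 ≤ (μ : ℝ) := by exact_mod_cast Nat.succ_le.2 hlt
        nlinarith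
      · have : (μ : ℝ) + 1 ≤ (ν : ℝ) := by exact_mod_cast Nat.succ_le.2 hlt
        nlinarith
    nlinarith [sq_nonneg ((μ : ℝ) + (ν : ℝ)),
      mul_nonneg (Nat.cast_nonneg μ : (0:ℝ) ≤ μ) (Nat.cast_nonneg ν : (0:ℝ) ≤ ν), h1]
  -- error estimate at the nodes
  have herr : ∀ μ : ℕ, dist (c ((μ : ℂ) ^ 2)) (d μ) ≤ C₀ * Real.exp (-(μ : ℝ) ^ 2) := by
    intro μ
    rw [dist_pi_le_iff (by positivity)]
    intro i
    rw [dist_eq_norm]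
    have hsum := hsum_at ((μ : ℂ) ^ 2) i
    have hsplit := hsum.tsum_eq_add_tsum_ite μ
    have hnode : d μ i * Complex.exp (-(((μ : ℂ) ^ 2) - ((μ : ℂ)) ^ 2) ^ 2) = d μ i := by
      simp
    have hrw : c ((μ : ℂ) ^ 2) i - d μ i
        = ∑' ν : ℕ, ite (ν = μ) 0 (d ν i * Complex.exp (-(((μ : ℂ) ^ 2) - ((ν : ℂ)) ^ 2) ^ 2)) := by
      rw [hc_def]
      dsimp only
      rw [hsplit, hnode]
      ring
    rw [hrw]
    have hbound : ∀ ν : ℕ,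
        ‖ite (ν = μ) 0 (d ν i * Complex.exp (-(((μ : ℂ) ^ 2) - ((ν : ℂ)) ^ 2) ^ 2))‖
          ≤ Real.exp (-(μ : ℝ) ^ 2) * ((ν : ℝ) * Real.exp (-(ν : ℝ) ^ 2)) := by
      intro ν
      by_cases hνμ : ν = μ
      · rw [if_pos hνμ, norm_zero]
        positivity
      · rw [if_neg hνμ, norm_mul]
        have h1 : ‖d ν i‖ ≤ (ν : ℝ) := (norm_le_pi_norm (d ν) i).trans (hd_norm ν)
        have h2 : ‖Complex.exp (-(((μ : ℂ) ^ 2) - ((ν : ℂ)) ^ 2) ^ 2)‖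
            ≤ Real.exp (-((μ : ℝ) ^ 2 + (ν : ℝ) ^ 2)) := by
          have hcast : (-(((μ : ℂ) ^ 2) - ((ν : ℂ)) ^ 2) ^ 2)
              = (((-((μ : ℝ) ^ 2 - (ν : ℝ) ^ 2) ^ 2 : ℝ)) : ℂ) := by
            push_cast; ring
          rw [hcast, Complex.norm_exp, Complex.ofReal_re]
          exact Real.exp_le_exp.2 (by nlinarith [hsq μ ν hνμ])
        calc ‖d ν i‖ * ‖Complex.exp (-(((μ : ℂ) ^ 2) - ((ν : ℂ)) ^ 2) ^ 2)‖
            ≤ (ν : ℝ) * Real.exp (-((μ : ℝ) ^ 2 + (ν : ℝ) ^ 2)) :=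
              mul_le_mul h1 h2 (norm_nonneg _) (Nat.cast_nonneg _)
          _ = Real.exp (-(μ : ℝ) ^ 2) * ((ν : ℝ) * Real.exp (-(ν : ℝ) ^ 2)) := by
              rw [show -((μ : ℝ) ^ 2 + (ν : ℝ) ^ 2) = (-(μ : ℝ) ^ 2) + (-(ν : ℝ) ^ 2) by ring,
                Real.exp_add]
              ring
    have hs2 : Summable (fun ν : ℕ =>
        Real.exp (-(μ : ℝ) ^ 2) * ((ν : ℝ) * Real.exp (-(ν : ℝ) ^ 2))) :=
      my_summable_small.mul_left _
    have hs1 : Summable (fun ν : ℕ =>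
        ‖ite (ν = μ) 0 (d ν i * Complex.exp (-(((μ : ℂ) ^ 2) - ((ν : ℂ)) ^ 2) ^ 2))‖) :=
      Summable.of_nonneg_of_le (fun _ => norm_nonneg _) hbound hs2
    calc ‖∑' ν : ℕ, ite (ν = μ) 0 (d ν i * Complex.exp (-(((μ : ℂ) ^ 2) - ((ν : ℂ)) ^ 2) ^ 2))‖
        ≤ ∑' ν : ℕ, ‖ite (ν = μ) 0 (d ν i * Complex.exp (-(((μ : ℂ) ^ 2) - ((ν : ℂ)) ^ 2) ^ 2))‖ :=
          norm_tsum_le_tsum_norm hs1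
      _ ≤ ∑' ν : ℕ, Real.exp (-(μ : ℝ) ^ 2) * ((ν : ℝ) * Real.exp (-(ν : ℝ) ^ 2)) :=
          Summable.tsum_le_tsum hbound hs1 hs2
      _ = Real.exp (-(μ : ℝ) ^ 2) * C₀ := tsum_mul_left
      _ = C₀ * Real.exp (-(μ : ℝ) ^ 2) := mul_comm _ _
  -- approximation of the dense sequence at the nodes
  have happrox : ∀ (i0 : ℕ) (ε : ℝ), 0 < ε →
      ∃ ν : ℕ, d ν = e i0 ∧ dist (c ((ν : ℂ) ^ 2)) (d ν) < ε := by
    intro i0 ε hε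
    have h1 : Tendsto (fun μ : ℕ => Real.exp (-(μ : ℝ))) atTop (𝓝 0) :=
      Real.tendsto_exp_atBot.comp (tendsto_neg_atTop_atBot.comp tendsto_natCast_atTop_atTop)
    have htd : Tendsto (fun μ : ℕ => C₀ * Real.exp (-(μ : ℝ))) atTop (𝓝 0) := by
      simpa using h1.const_mul C₀
    obtain ⟨M, hM⟩ := eventually_atTop.1 (htd.eventually_lt_const hε)
    set ν := Nat.pair i0 (max M ⌈‖e i0‖⌉₊) with hν_def
    have hνM : M ≤ ν := le_trans (le_max_left _ _) (Nat.right_le_pair _ _)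
    have hνe : ‖e i0‖ ≤ (ν : ℝ) := by
      calc ‖e i0‖ ≤ (⌈‖e i0‖⌉₊ : ℝ) := Nat.le_ceil _
        _ ≤ (ν : ℝ) := by
            exact_mod_cast le_trans (le_max_right M _) (Nat.right_le_pair _ _)
    have hdν : d ν = e i0 := by
      rw [hd_def]
      dsimp only
      rw [hν_def, Nat.unpair_pair]
      dsimp only
      rw [← hν_def, if_pos hνe]
    refine ⟨ν, hdν, lt_of_le_of_lt (herr ν) ?_⟩
    calc C₀ * Real.exp (-(ν : ℝ) ^ 2) ≤ C₀ * Real.exp (-(ν : ℝ)) := by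
          apply mul_le_mul_of_nonneg_left _ hC₀
          apply Real.exp_le_exp.2
          have : (ν : ℝ) ≤ (ν : ℝ) ^ 2 := by
            exact_mod_cast Nat.le_self_pow (two_ne_zero) ν
          linarith
      _ < ε := hM ν hνM
  -- density of node values
  refine ⟨c, hcdiff, ?_⟩
  have hsub : Set.range e ⊆ closure (Set.range fun ν : ℕ => c ((ν : ℂ) ^ 2)) := by
    rintro _ ⟨i0, rfl⟩
    rw [Metric.mem_closure_iff]
    intro ε hε
    obtain ⟨ν, hdν, hlt⟩ := happrox i0 ε hε
    refine ⟨c ((ν : ℂ) ^ 2), ⟨ν, rfl⟩, ?_⟩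
    rw [dist_comm]
    rwa [hdν] at hlt
  intro x
  exact closure_minimal hsub isClosed_closure (he x)

/-- For `n ≥ 1` there is an infinite subset `Γ ⊆ ℂⁿ` meeting the zero set of every
entire function `F : ℂⁿ → ℂ` that is not identically zero in only finitely many points. -/
theorem exists_infinite_nondegenerate_set_complex {n : ℕ} (hn : 1 ≤ n) :
    ∃ Γ : Set (Fin n → ℂ), Γ.Infinite ∧
      ∀ F : (Fin n → ℂ) → ℂ, Differentiable ℂ F → (∃ x, F x ≠ 0) →
        {γ ∈ Γ | F γ = 0}.Finite := by
  classical
  obtain ⟨c, hcdiff, hcdense⟩ := my_exists_curve n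
  refine ⟨Set.range (fun m : ℕ => c (1 / ((m : ℂ) + 1))), ?_, ?_⟩
  · -- infiniteness
    intro hfin
    haveI : Finite (Set.range (fun m : ℕ => c (1 / ((m : ℂ) + 1)))) := hfin.to_subtype
    obtain ⟨w, hw⟩ := Finite.exists_infinite_fiber
      (fun m : ℕ => (⟨c (1 / ((m : ℂ) + 1)), Set.mem_range_self m⟩ :
        Set.range (fun m : ℕ => c (1 / ((m : ℂ) + 1)))))
    have hsets : ((fun m : ℕ => (⟨c (1 / ((m : ℂ) + 1)), Set.mem_range_self m⟩ :
        Set.range (fun m : ℕ => c (1 / ((m : ℂ) + 1))))) ⁻¹' {w})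
        = {m : ℕ | c (1 / ((m : ℂ) + 1)) = (w : Fin n → ℂ)} := by
      ext m
      simp [Subtype.ext_iff]
    rw [hsets] at hw
    have hT : {m : ℕ | c (1 / ((m : ℂ) + 1)) = (w : Fin n → ℂ)}.Infinite :=
      Set.infinite_coe_iff.1 hw
    have hconst : ∀ t, c t = (w : Fin n → ℂ) := by
      intro t
      funext i
      have hz : ∀ m ∈ {m : ℕ | c (1 / ((m : ℂ) + 1)) = (w : Fin n → ℂ)},
          (fun s => c s i - (w : Fin n → ℂ) i) (1 / ((m : ℂ) + 1)) = 0 := by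
        intro m hm
        simp only [Set.mem_setOf_eq] at hm
        show c (1 / ((m : ℂ) + 1)) i - (w : Fin n → ℂ) i = 0
        rw [hm, sub_self]
      have := my_zero_of_zeros ((differentiable_pi.1 hcdiff i).sub_const _) hT hz t
      exact sub_eq_zero.1 this
    have hrange : (Set.range fun ν : ℕ => c ((ν : ℂ) ^ 2)) = {(w : Fin n → ℂ)} := by
      ext x
      constructor
      · rintro ⟨ν, rfl⟩
        exact hconst _
      · rintro rfl
        exact ⟨0, hconst _⟩
    have hdense2 : Dense ({(w : Fin n → ℂ)} : Set (Fin n → ℂ)) := by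
      rw [← hrange]
      exact hcdense
    have huniv := hdense2.closure_eq
    rw [closure_singleton] at huniv
    have h0 : (fun _ => (0 : ℂ) : Fin n → ℂ) ∈ ({(w : Fin n → ℂ)} : Set (Fin n → ℂ)) := by
      rw [huniv]; trivial
    have h1 : (fun _ => (1 : ℂ) : Fin n → ℂ) ∈ ({(w : Fin n → ℂ)} : Set (Fin n → ℂ)) := by
      rw [huniv]; trivial
    rw [Set.mem_singleton_iff] at h0 h1
    have : (fun _ => (0 : ℂ) : Fin n → ℂ) = (fun _ => (1 : ℂ)) := by rw [h0, h1]
    have h01 := congrFun this ⟨0, hn⟩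
    norm_num at h01
  · -- finiteness of zero sets
    intro F hF hex
    by_contra hSinf
    have hT : {m : ℕ | F (c (1 / ((m : ℂ) + 1))) = 0}.Infinite := by
      intro hTfin
      apply hSinf
      have hsub : {γ ∈ Set.range (fun m : ℕ => c (1 / ((m : ℂ) + 1))) | F γ = 0}
          ⊆ (fun m : ℕ => c (1 / ((m : ℂ) + 1))) '' {m : ℕ | F (c (1 / ((m : ℂ) + 1))) = 0} := by
        rintro γ ⟨⟨m, rfl⟩, hγ⟩
        exact ⟨m, hγ, rfl⟩
      exact ((hTfin.image _).subset hsub)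
    have hzero : ∀ t, F (c t) = 0 :=
      my_zero_of_zeros (hF.comp hcdiff) hT (fun m hm => hm)
    have hFall : ∀ x, F x = 0 := by
      have hcl : IsClosed {x : Fin n → ℂ | F x = 0} :=
        isClosed_eq hF.continuous continuous_const
      have hsub : (Set.range fun ν : ℕ => c ((ν : ℂ) ^ 2)) ⊆ {x | F x = 0} := by
        rintro _ ⟨ν, rfl⟩
        exact hzero _
      intro x
      exact closure_minimal hsub hcl (hcdense x)
    obtain ⟨x, hx⟩ := hex
    exact hx (hFall x)
end

section
/- Let n ≥ 1. There exists an infinite subset Γ ⊆ ℝⁿ such that for every real-analytic function F : ℝⁿ → ℝ that is not identically zero, the set {γ ∈ Γ : F(γ) = 0} is finite. -/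
open Finset Filter

namespace NondegAux

variable {n m : ℕ}

/-- standard basis vector -/
def E (j : Fin n) : Fin n → ℝ := fun j' => if j = j' then 1 else 0

lemma multilinear_expand (f : ContinuousMultilinearMap ℝ (fun _ : Fin m => (Fin n → ℝ)) ℝ)
    (y : Fin n → ℝ) :
    (f fun _ => y) = ∑ d : Fin m → Fin n, (∏ i, y (d i)) * f (fun i => E (d i)) := by
  have h0 : (fun _ : Fin m => y) = fun _ : Fin m => ∑ j : Fin n, y j • E j := by
    funext _; exact pi_eq_sum_univ y
  rw [h0, f.map_sum (g := fun _ j => y j • E j)]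
  refine Finset.sum_congr rfl fun d _ => ?_
  rw [f.map_smul_univ (fun i => y (d i)) (fun i => E (d i)), smul_eq_mul]

/-- count vector of a function `d : Fin m → Fin n` -/
def cnt (d : Fin m → Fin n) : Fin n → ℕ := fun j => #{i | d i = j}

lemma prod_cnt (y : Fin n → ℝ) (d : Fin m → Fin n) :
    ∏ i, y (d i) = ∏ j : Fin n, y j ^ cnt d j := by
  rw [Finset.prod_comp y d]
  refine Finset.prod_subset (Finset.subset_univ _) fun j _ hj => ?_
  have hc : cnt d j = 0 := by
    simp only [cnt, Finset.card_eq_zero, Finset.filter_eq_empty_iff]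
    intro i _ h
    exact hj (h ▸ Finset.mem_image_of_mem d (Finset.mem_univ i))
  rw [show (#{a | d a = j} : ℕ) = cnt d j from rfl, hc, pow_zero]

lemma sum_cnt (d : Fin m → Fin n) : ∑ j : Fin n, cnt d j = m := by
  have := Finset.card_eq_sum_card_fiberwise (fun i (_ : i ∈ Finset.univ) => Finset.mem_univ (d i))
  simpa [cnt] using this.symm

def qpoly (α : Fin n → ℕ) (x : ℝ) : ℝ := ∑ j : Fin n, (α j : ℝ) * x ^ (j : ℕ)

lemma qpoly_nonneg (α : Fin n → ℕ) {x : ℝ} (hx : 0 ≤ x) : 0 ≤ qpoly α x :=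
  Finset.sum_nonneg fun j _ => mul_nonneg (Nat.cast_nonneg _) (pow_nonneg hx _)

lemma qpoly_dominate {α β : Fin n → ℕ} (hs : ∑ j, α j = m) (hs' : ∑ j, β j = m)
    (hlt : toLex (α ∘ Fin.rev) < toLex (β ∘ Fin.rev)) {x : ℝ} (hx1 : 1 ≤ x)
    (hx2 : ((n * m : ℕ) : ℝ) ≤ x) :
    qpoly α x + (x - ((n * m : ℕ) : ℝ)) ≤ qpoly β x := by
  have hx0 : (0:ℝ) ≤ x := le_trans zero_le_one hx1
  obtain ⟨j, hsm, hj⟩ := hlt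
  set J := j.rev with hJdef
  have ha : ∀ J', J < J' → α J' = β J' := by
    intro J' h
    have h1 : J'.rev < j := by
      rw [← Fin.rev_rev j]
      exact Fin.rev_lt_rev.mpr h
    have := hsm J'.rev h1
    simpa [Fin.rev_rev] using this
  have hb : α J < β J := hj
  have hJ1 : 1 ≤ (J : ℕ) := by
    by_contra hc
    push_neg at hc
    interval_cases h : (J : ℕ)
    · have heq : ∀ J' ∈ Finset.univ.erase J, α J' = β J' := by
        intro J' hJ'
        have hne : J' ≠ J := (Finset.mem_erase.mp hJ').1
        refine ha J' ?_
        have : (J' : ℕ) ≠ 0 := fun h0 => hne (Fin.ext (h0.trans h.symm))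
        exact Fin.lt_def.mpr (by omega)
      have e1 := Finset.add_sum_erase Finset.univ α (Finset.mem_univ J)
      have e2 := Finset.add_sum_erase Finset.univ β (Finset.mem_univ J)
      rw [Finset.sum_congr rfl heq] at e1
      rw [show (Finset.univ.erase J).sum β = ∑ x ∈ Finset.univ.erase J, β x from rfl] at e1
      rw [hs] at e1
      rw [hs'] at e2
      omega
  set c : Fin n → ℝ := fun j' => (β j' : ℝ) - (α j' : ℝ) with hcdef
  have hsplit : qpoly β x - qpoly α x = ∑ j' : Fin n, c j' * x ^ (j' : ℕ) := by
    simp [qpoly, hcdef, sub_mul, Finset.sum_sub_distrib]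
  set p : ℝ := x ^ ((J : ℕ) - 1) with hpdef
  have hp1 : 1 ≤ p := one_le_pow₀ hx1
  have hp0 : 0 ≤ p := le_trans zero_le_one hp1
  have hxJ : x ^ (J : ℕ) = x * p := by
    rw [hpdef, ← pow_succ']
    congr 1
    omega
  have hαle : ∀ j', (α j' : ℝ) ≤ (m : ℝ) := by
    intro j'
    exact_mod_cast (Finset.single_le_sum (fun _ _ => Nat.zero_le _)
      (Finset.mem_univ j')).trans_eq hs
  have herase : ∀ j' ∈ Finset.univ.erase J, -((m:ℝ)) * p ≤ c j' * x ^ (j' : ℕ) := by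
    intro j' hj'
    have hne : j' ≠ J := (Finset.mem_erase.mp hj').1
    rcases lt_or_gt_of_ne hne with hlt' | hgt
    · have hle : (j' : ℕ) ≤ (J : ℕ) - 1 := by
        have := Fin.lt_def.mp hlt'; omega
      have hxp : x ^ (j' : ℕ) ≤ p := pow_le_pow_right₀ hx1 hle
      have hc1 : -((m:ℝ)) ≤ c j' := by
        have h1 := hαle j'
        have h2 : (0:ℝ) ≤ (β j' : ℝ) := Nat.cast_nonneg _
        simp only [hcdef]
        linarith
      calc -((m:ℝ)) * p ≤ -((m:ℝ)) * x ^ (j' : ℕ) := by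
            apply mul_le_mul_of_nonpos_left hxp
            simp [Nat.cast_nonneg]
        _ ≤ c j' * x ^ (j' : ℕ) := mul_le_mul_of_nonneg_right hc1 (pow_nonneg hx0 _)
    · have hz : c j' = 0 := by simp [hcdef, ha j' hgt]
      rw [hz, zero_mul]
      exact mul_nonpos_of_nonpos_of_nonneg (by simp [Nat.cast_nonneg]) hp0
  have hsumlb := Finset.card_nsmul_le_sum (Finset.univ.erase J)
      (fun j' => c j' * x ^ (j' : ℕ)) (-((m:ℝ)) * p) herase
  rw [nsmul_eq_mul] at hsumlb
  have hcard0 : (0:ℝ) ≤ (((Finset.univ.erase J).card : ℕ) : ℝ) := Nat.cast_nonneg _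
  have hcardn : (((Finset.univ.erase J).card : ℕ) : ℝ) ≤ (n : ℝ) := by
    have : (Finset.univ.erase J).card ≤ n := by
      simpa using (Finset.card_erase_of_mem (Finset.mem_univ J)) ▸ Nat.sub_le (Finset.univ.card) 1
        |>.trans (by simp [Finset.card_univ])
    exact_mod_cast this
  have hmain : c J * x ^ (J : ℕ) + ∑ j' ∈ Finset.univ.erase J, c j' * x ^ (j' : ℕ)
      = qpoly β x - qpoly α x := by
    rw [hsplit]
    exact Finset.add_sum_erase _ (fun j' => c j' * x ^ (j' : ℕ)) (Finset.mem_univ J)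
  have hcJ : (1:ℝ) ≤ c J := by
    have : (α J : ℝ) + 1 ≤ (β J : ℝ) := by exact_mod_cast hb
    simp only [hcdef]; linarith
  have hnm : ((n * m : ℕ) : ℝ) = (n:ℝ) * (m:ℝ) := by push_cast; ring
  rw [hxJ] at hmain
  nlinarith [mul_nonneg hx0 hp0, mul_le_mul_of_nonneg_right hcJ (mul_nonneg hx0 hp0),
    mul_nonneg (sub_nonneg.mpr hp1) (sub_nonneg.mpr (hnm ▸ hx2)),
    mul_le_mul_of_nonneg_right hcardn (mul_nonneg (Nat.cast_nonneg m : (0:ℝ) ≤ m) hp0),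
    mul_nonneg (mul_nonneg (Nat.cast_nonneg n : (0:ℝ) ≤ n) (Nat.cast_nonneg m : (0:ℝ) ≤ m)) hp0]

lemma tendsto_exp_const_sub (a : ℝ) :
    Tendsto (fun k : ℕ => Real.exp (a - (k : ℝ))) atTop (nhds 0) := by
  apply Real.tendsto_exp_atBot.comp
  have h1 : Tendsto (fun k : ℕ => -(k : ℝ)) atTop atBot :=
    tendsto_neg_atBot_iff.mpr tendsto_natCast_atTop_atTop
  simpa [sub_eq_add_neg] using tendsto_atBot_add_const_left atTop a h1

end NondegAux

open NondegAux

/-- For `n ≥ 1` there is an infinite subset `Γ ⊆ ℝⁿ` meeting the zero set of every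
real-analytic function `F : ℝⁿ → ℝ` that is not identically zero in only finitely many
points. -/
theorem exists_infinite_nondegenerate_set_real {n : ℕ} (hn : 1 ≤ n) :
    ∃ Γ : Set (Fin n → ℝ), Γ.Infinite ∧
      ∀ F : (Fin n → ℝ) → ℝ, AnalyticOn ℝ F Set.univ → (∃ x, F x ≠ 0) →
        {γ ∈ Γ | F γ = 0}.Finite := by
  classical
  set j0 : Fin n := ⟨0, hn⟩ with hj0
  set w : ℕ → (Fin n → ℝ) := fun k => fun j => Real.exp ((k : ℝ) ^ (j : ℕ)) with hw
  set t : ℕ → ℝ := fun k => Real.exp (-((k : ℝ) ^ (n + 1))) with ht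
  set γ : ℕ → (Fin n → ℝ) := fun k => t k • w k with hγ
  have hγinj : Function.Injective γ := by
    intro k k' h
    have h0 := congrFun h j0
    simp only [hγ, Pi.smul_apply, smul_eq_mul, hw, ht, hj0] at h0
    rw [← Real.exp_add, ← Real.exp_add, Real.exp_eq_exp] at h0
    have : ((k ^ (n+1) : ℕ) : ℝ) = ((k' ^ (n+1) : ℕ) : ℝ) := by push_cast; linarith
    have h2 : k ^ (n+1) = k' ^ (n+1) := Nat.cast_injective this
    exact Nat.pow_left_injective (by omega) h2
  refine ⟨Set.range γ, Set.infinite_range_of_injective hγinj, ?_⟩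
  intro F hF hex
  by_contra hfin
  rw [← Set.not_infinite, not_not] at hfin
  -- the set of parameters where F vanishes is infinite
  have hK : {k : ℕ | F (γ k) = 0}.Infinite := by
    by_contra hKfin
    rw [Set.not_infinite] at hKfin
    refine hfin ((hKfin.image γ).subset ?_)
    rintro z ⟨⟨k, rfl⟩, hz⟩
    exact ⟨k, hz, rfl⟩
  have hA : AnalyticOnNhd ℝ F Set.univ := analyticOn_univ.mp hF
  obtain ⟨pser, hp⟩ : AnalyticAt ℝ F 0 := hA 0 (Set.mem_univ 0)
  by_cases hQ0 : ∀ (i : ℕ) (y : Fin n → ℝ), (pser i fun _ => y) = 0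
  · -- all diagonal coefficients vanish : F vanishes near 0, hence everywhere
    obtain ⟨r, hball⟩ := hp
    have hev : F =ᶠ[nhds (0 : Fin n → ℝ)] 0 := by
      filter_upwards [EMetric.ball_mem_nhds (0 : Fin n → ℝ) hball.r_pos] with y hy
      have h1 := hball.hasSum hy
      rw [show (fun i => pser i fun _ => y) = (fun _ : ℕ => (0 : ℝ)) from
        funext fun i => hQ0 i y] at h1
      simpa using h1.unique hasSum_zero
    obtain ⟨x₀, hx₀⟩ := hex
    exact hx₀ (hA.eqOn_zero_of_preconnected_of_eventuallyEq_zero isPreconnected_univ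
      (Set.mem_univ (0 : Fin n → ℝ)) hev (Set.mem_univ x₀))
  · push_neg at hQ0
    set m := Nat.find hQ0 with hmdef
    obtain ⟨y₀, hy₀⟩ := Nat.find_spec hQ0
    have hlow : ∀ i, i < m → ∀ y : Fin n → ℝ, (pser i fun _ => y) = 0 := by
      intro i hi y
      have := Nat.find_min hQ0 hi
      push_neg at this
      exact this y
    -- Taylor remainder estimate
    obtain ⟨C0, hC0⟩ := Asymptotics.isBigO_iff.mp (hp.isBigO_sub_partialSum_pow (m + 1))
    rw [Metric.eventually_nhds_iff] at hC0
    obtain ⟨δ, hδpos, hδ⟩ := hC0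
    set C := max C0 1 with hCdef
    have hCpos : (0 : ℝ) < C := lt_of_lt_of_le zero_lt_one (le_max_right _ _)
    have hrem : ∀ y : Fin n → ℝ, ‖y‖ < δ →
        ‖F y - (pser m fun _ => y)‖ ≤ C * ‖y‖ ^ (m + 1) := by
      intro y hy
      have h1 := hδ (show dist y 0 < δ by simpa [dist_zero_right] using hy)
      have hps : pser.partialSum (m + 1) y = (pser m fun _ => y) := by
        rw [FormalMultilinearSeries.partialSum, Finset.sum_range_succ,
          Finset.sum_eq_zero (fun i hi => hlow i (Finset.mem_range.mp hi) y), zero_add]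
      rw [zero_add, hps] at h1
      have h2 : ‖(‖y‖ ^ (m + 1) : ℝ)‖ = ‖y‖ ^ (m + 1) :=
        Real.norm_of_nonneg (pow_nonneg (norm_nonneg y) _)
      rw [h2] at h1
      exact h1.trans (mul_le_mul_of_nonneg_right (le_max_left _ _)
        (pow_nonneg (norm_nonneg y) _))
    -- algebraic expansion of the lowest nonvanishing diagonal coefficient
    set Aco : (Fin n → ℕ) → ℝ :=
      fun α => ∑ d ∈ Finset.univ.filter (fun d : Fin m → Fin n => cnt d = α),
        pser m (fun i => E (d i)) with hAcodef
    set A : Finset (Fin n → ℕ) := Finset.univ.image cnt with hAdef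
    have hQrep : ∀ y : Fin n → ℝ,
        (pser m fun _ => y) = ∑ α ∈ A, (∏ j, y j ^ α j) * Aco α := by
      intro y
      rw [multilinear_expand (pser m) y,
        ← Finset.sum_fiberwise_of_maps_to
          (fun d _ => Finset.mem_image_of_mem cnt (Finset.mem_univ d))
          (fun d : Fin m → Fin n => (∏ i, y (d i)) * pser m (fun i => E (d i)))]
      refine Finset.sum_congr rfl fun α hα => ?_
      rw [hAcodef, Finset.mul_sum]
      refine Finset.sum_congr rfl fun d hd => ?_
      have hcd : cnt d = α := (Finset.mem_filter.mp hd).2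
      rw [prod_cnt y d, hcd]
    have hsumA : ∀ α ∈ A, ∑ j, α j = m := by
      intro α hα
      obtain ⟨d, -, rfl⟩ := Finset.mem_image.mp hα
      exact sum_cnt d
    set S := A.filter (fun α => Aco α ≠ 0) with hSdef
    have hSne : S.Nonempty := by
      by_contra hse
      rw [Finset.not_nonempty_iff_eq_empty, Finset.filter_eq_empty_iff] at hse
      refine hy₀ ?_
      rw [hQrep y₀]
      exact Finset.sum_eq_zero fun α hα => by rw [not_not.mp (hse hα), mul_zero]
    letI : LinearOrder (Lex (Fin n → ℕ)) :=
      @Pi.Lex.linearOrder (Fin n) (fun _ => ℕ) inferInstance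
        (inferInstance : WellFoundedLT (Fin n)) (fun _ => inferInstance)
    obtain ⟨αs, hαsS, hαsmax⟩ := Finset.exists_max_image (α := Lex (Fin n → ℕ)) S
      (fun α => toLex (α ∘ Fin.rev)) hSne
    have hαsA : αs ∈ A := (Finset.mem_filter.mp hαsS).1
    have hAs0 : Aco αs ≠ 0 := (Finset.mem_filter.mp hαsS).2
    set As : ℝ := ‖Aco αs‖ with hAsdef
    have hAspos : 0 < As := norm_pos_iff.mpr hAs0
    set B : ℝ := ∑ α ∈ A, ‖Aco α‖ with hBdef
    have hBnn : (0 : ℝ) ≤ B := Finset.sum_nonneg fun _ _ => norm_nonneg _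
    -- lower bound along the sequence of directions
    have hlower : ∀ k : ℕ, (1 : ℝ) ≤ (k : ℝ) → ((n * m : ℕ) : ℝ) ≤ (k : ℝ) →
        As - Real.exp (((n * m : ℕ) : ℝ) - (k : ℝ)) * B ≤ ‖(pser m fun _ => w k)‖ := by
      intro k hk1 hk2
      have hk0 : (0 : ℝ) ≤ (k : ℝ) := le_trans zero_le_one hk1
      have hwq : ∀ α : Fin n → ℕ,
          (∏ j, (w k) j ^ α j) = Real.exp (qpoly α (k : ℝ)) := by
        intro α
        rw [show qpoly α (k : ℝ) = ∑ j : Fin n, (α j : ℝ) * (k : ℝ) ^ (j : ℕ) from rfl,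
          Real.exp_sum]
        refine Finset.prod_congr rfl fun j _ => ?_
        show Real.exp ((k : ℝ) ^ (j : ℕ)) ^ α j = _
        exact (Real.exp_nat_mul _ _).symm
      have hQk : (pser m fun _ => w k) = ∑ α ∈ A, Real.exp (qpoly α (k : ℝ)) * Aco α := by
        rw [hQrep (w k)]
        exact Finset.sum_congr rfl fun α _ => by rw [hwq α]
      have hsplitk : (pser m fun _ => w k)
          = Real.exp (qpoly αs (k : ℝ)) * Aco αs
            + ∑ α ∈ A.erase αs, Real.exp (qpoly α (k : ℝ)) * Aco α := by
        rw [hQk]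
        exact (Finset.add_sum_erase A (fun α => Real.exp (qpoly α (k : ℝ)) * Aco α) hαsA).symm
      have hterm : ∀ α ∈ A.erase αs,
          ‖Real.exp (qpoly α (k : ℝ)) * Aco α‖
            ≤ Real.exp (qpoly αs (k : ℝ)) * (Real.exp (((n * m : ℕ) : ℝ) - (k : ℝ)) * ‖Aco α‖) := by
        intro α hα
        obtain ⟨hne, hαA⟩ := Finset.mem_erase.mp hα
        by_cases hz : Aco α = 0
        · simp only [hz, mul_zero, norm_zero]
          positivity
        · have hαS : α ∈ S := Finset.mem_filter.mpr ⟨hαA, hz⟩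
          have hle := hαsmax α hαS
          have hlt : toLex (α ∘ Fin.rev) < toLex (αs ∘ Fin.rev) := by
            refine lt_of_le_of_ne hle fun heq => hne ?_
            have h2 : α ∘ Fin.rev = αs ∘ Fin.rev := heq
            funext J
            have := congrFun h2 J.rev
            simpa [Fin.rev_rev] using this
          have hq := qpoly_dominate (hsumA α hαA) (hsumA αs hαsA) hlt hk1 hk2
          have he : Real.exp (qpoly α (k : ℝ))
              ≤ Real.exp (qpoly αs (k : ℝ)) * Real.exp (((n * m : ℕ) : ℝ) - (k : ℝ)) := by
            rw [← Real.exp_add]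
            exact Real.exp_le_exp.mpr (by linarith)
          calc ‖Real.exp (qpoly α (k : ℝ)) * Aco α‖
              = Real.exp (qpoly α (k : ℝ)) * ‖Aco α‖ := by
                rw [norm_mul, Real.norm_of_nonneg (Real.exp_pos _).le]
            _ ≤ (Real.exp (qpoly αs (k : ℝ)) * Real.exp (((n * m : ℕ) : ℝ) - (k : ℝ))) * ‖Aco α‖ :=
                mul_le_mul_of_nonneg_right he (norm_nonneg _)
            _ = Real.exp (qpoly αs (k : ℝ))
                * (Real.exp (((n * m : ℕ) : ℝ) - (k : ℝ)) * ‖Aco α‖) := by ring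
      have hsum2 : ‖∑ α ∈ A.erase αs, Real.exp (qpoly α (k : ℝ)) * Aco α‖
          ≤ Real.exp (qpoly αs (k : ℝ)) * (Real.exp (((n * m : ℕ) : ℝ) - (k : ℝ)) * B) := by
        refine (norm_sum_le _ _).trans ((Finset.sum_le_sum hterm).trans ?_)
        rw [← Finset.mul_sum, ← Finset.mul_sum]
        refine mul_le_mul_of_nonneg_left (mul_le_mul_of_nonneg_left ?_ (Real.exp_pos _).le)
          (Real.exp_pos _).le
        exact Finset.sum_le_sum_of_subset_of_nonneg (Finset.erase_subset _ _)
          (fun _ _ _ => norm_nonneg _)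
      have h1e : 1 ≤ Real.exp (qpoly αs (k : ℝ)) := Real.one_le_exp (qpoly_nonneg αs hk0)
      have hge : Real.exp (qpoly αs (k : ℝ)) * As
          - Real.exp (qpoly αs (k : ℝ)) * (Real.exp (((n * m : ℕ) : ℝ) - (k : ℝ)) * B)
          ≤ ‖(pser m fun _ => w k)‖ := by
        rw [hsplitk]
        have h3 := norm_sub_norm_le (Real.exp (qpoly αs (k : ℝ)) * Aco αs)
          (-(∑ α ∈ A.erase αs, Real.exp (qpoly α (k : ℝ)) * Aco α))
        rw [norm_neg, sub_neg_eq_add] at h3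
        have h4 : ‖Real.exp (qpoly αs (k : ℝ)) * Aco αs‖ = Real.exp (qpoly αs (k : ℝ)) * As := by
          rw [norm_mul, Real.norm_of_nonneg (Real.exp_pos _).le]
        linarith [hsum2]
      rcases le_or_gt 0 (As - Real.exp (((n * m : ℕ) : ℝ) - (k : ℝ)) * B) with hsign | hsign
      · have h5 : As - Real.exp (((n * m : ℕ) : ℝ) - (k : ℝ)) * B
            ≤ Real.exp (qpoly αs (k : ℝ)) * (As - Real.exp (((n * m : ℕ) : ℝ) - (k : ℝ)) * B) :=
          le_mul_of_one_le_left hsign h1e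
        nlinarith [hge]
      · exact hsign.le.trans (norm_nonneg _)
    -- choose a large zero parameter
    have e1 : ∀ᶠ k : ℕ in atTop, (1 : ℝ) ≤ (k : ℝ) :=
      tendsto_natCast_atTop_atTop.eventually_ge_atTop 1
    have e2 : ∀ᶠ k : ℕ in atTop, ((n * m : ℕ) : ℝ) ≤ (k : ℝ) :=
      tendsto_natCast_atTop_atTop.eventually_ge_atTop _
    have e4 : ∀ᶠ k : ℕ in atTop, ((m : ℝ) + 1) ≤ (k : ℝ) :=
      tendsto_natCast_atTop_atTop.eventually_ge_atTop _
    have e3 : ∀ᶠ k : ℕ in atTop,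
        Real.exp (((n * m : ℕ) : ℝ) - (k : ℝ)) * B < As / 2 := by
      have h := (tendsto_exp_const_sub ((n * m : ℕ) : ℝ)).mul_const B
      rw [zero_mul] at h
      exact h.eventually_lt_const (by positivity)
    have e5 : ∀ᶠ k : ℕ in atTop, C * Real.exp (((m : ℝ) + 1) - (k : ℝ)) < As / 2 := by
      have h := (tendsto_exp_const_sub ((m : ℝ) + 1)).const_mul C
      rw [mul_zero] at h
      exact h.eventually_lt_const (by positivity)
    have e6 : ∀ᶠ k : ℕ in atTop, Real.exp (1 - (k : ℝ)) < δ :=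
      (tendsto_exp_const_sub 1).eventually_lt_const hδpos
    obtain ⟨N, hN⟩ := Filter.eventually_atTop.mp (e1.and (e2.and (e4.and (e3.and (e5.and e6)))))
    obtain ⟨k, hkK, hkN⟩ := hK.exists_gt N
    obtain ⟨hk1, hk2, hk4, hk3, hk5, hk6⟩ := hN k hkN.le
    have hFz : F (γ k) = 0 := hkK
    have hk0 : (0 : ℝ) ≤ (k : ℝ) := le_trans zero_le_one hk1
    have hknn : (1 : ℝ) ≤ (k : ℝ) ^ n := one_le_pow₀ hk1
    have hwnorm : ‖γ k‖ ≤ Real.exp ((k : ℝ) ^ n - (k : ℝ) ^ (n + 1)) := by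
      refine (pi_norm_le_iff_of_nonneg (Real.exp_pos _).le).mpr fun j => ?_
      have hγj : γ k j = Real.exp ((k : ℝ) ^ (j : ℕ) - (k : ℝ) ^ (n + 1)) := by
        show t k * w k j = _
        rw [show t k = Real.exp (-((k : ℝ) ^ (n + 1))) from rfl,
          show w k j = Real.exp ((k : ℝ) ^ (j : ℕ)) from rfl, ← Real.exp_add]
        congr 1
        ring
      rw [hγj, Real.norm_of_nonneg (Real.exp_pos _).le]
      refine Real.exp_le_exp.mpr ?_
      have h6 : (k : ℝ) ^ (j : ℕ) ≤ (k : ℝ) ^ n := pow_le_pow_right₀ hk1 (le_of_lt j.isLt)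
      linarith
    have hsmall : ‖γ k‖ < δ := by
      refine lt_of_le_of_lt (hwnorm.trans (Real.exp_le_exp.mpr ?_)) hk6
      have hpow : (k : ℝ) ^ (n + 1) = (k : ℝ) ^ n * (k : ℝ) := pow_succ _ _
      nlinarith [mul_nonneg (sub_nonneg.mpr hknn) (sub_nonneg.mpr hk1)]
    have hrem2 := hrem (γ k) hsmall
    rw [hFz, zero_sub, norm_neg] at hrem2
    have hhom : (pser m fun _ => γ k) = (t k) ^ m * (pser m fun _ => w k) := by
      have h0 : (fun _ : Fin m => γ k)
          = fun i : Fin m => (fun _ : Fin m => t k) i • (fun _ : Fin m => w k) i := rfl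
      rw [h0, (pser m).map_smul_univ]
      simp [Finset.prod_const, Finset.card_univ, smul_eq_mul]
    rw [hhom, norm_mul, Real.norm_of_nonneg (pow_nonneg (Real.exp_pos _).le m)] at hrem2
    have htpos : 0 < t k := Real.exp_pos _
    have hg2 : ‖γ k‖ ^ (m + 1) ≤ (t k * Real.exp ((k : ℝ) ^ n)) ^ (m + 1) := by
      apply pow_le_pow_left₀ (norm_nonneg _)
      refine hwnorm.trans_eq ?_
      rw [show t k = Real.exp (-((k : ℝ) ^ (n + 1))) from rfl, ← Real.exp_add]
      congr 1
      ring
    have hkey : (t k) ^ m * ‖(pser m fun _ => w k)‖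
        ≤ C * (t k * Real.exp ((k : ℝ) ^ n)) ^ (m + 1) :=
      hrem2.trans (mul_le_mul_of_nonneg_left hg2 hCpos.le)
    have hdiv : ‖(pser m fun _ => w k)‖ ≤ C * t k * Real.exp ((k : ℝ) ^ n) ^ (m + 1) := by
      refine le_of_mul_le_mul_right ?_ (pow_pos htpos m)
      calc ‖(pser m fun _ => w k)‖ * (t k) ^ m
          = (t k) ^ m * ‖(pser m fun _ => w k)‖ := mul_comm _ _
        _ ≤ C * (t k * Real.exp ((k : ℝ) ^ n)) ^ (m + 1) := hkey
        _ = C * t k * Real.exp ((k : ℝ) ^ n) ^ (m + 1) * (t k) ^ m := by ring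
    have hCte : C * t k * Real.exp ((k : ℝ) ^ n) ^ (m + 1)
        = C * Real.exp (((m : ℝ) + 1) * (k : ℝ) ^ n - (k : ℝ) ^ (n + 1)) := by
      rw [show t k = Real.exp (-((k : ℝ) ^ (n + 1))) from rfl, ← Real.exp_nat_mul, mul_assoc,
        ← Real.exp_add]
      congr 1
      push_cast
      ring
    have hexpineq : ((m : ℝ) + 1) * (k : ℝ) ^ n - (k : ℝ) ^ (n + 1) ≤ ((m : ℝ) + 1) - (k : ℝ) := by
      have hpow : (k : ℝ) ^ (n + 1) = (k : ℝ) ^ n * (k : ℝ) := pow_succ _ _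
      nlinarith [mul_nonneg (sub_nonneg.mpr hknn) (sub_nonneg.mpr hk4)]
    have hfinal1 : ‖(pser m fun _ => w k)‖ ≤ C * Real.exp (((m : ℝ) + 1) - (k : ℝ)) :=
      (hdiv.trans_eq hCte).trans
        (mul_le_mul_of_nonneg_left (Real.exp_le_exp.mpr hexpineq) hCpos.le)
    have hfinal2 := hlower k hk1 hk2
    linarith
end

section
/- Let k be an infinite field and n ≥ 1. Then there exists an infinite subset Γ ⊆ kⁿ such that for every nonzero polynomial P ∈ k[X₁, …, Xₙ] the set {x ∈ Γ : P(x) = 0} is finite. -/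
/-- For a nonzero multivariate polynomial over an infinite field (with at least one
variable), the set of points where it does not vanish is infinite. -/
lemma aux_inf (k : Type*) [Field k] [Infinite k] {n : ℕ} (hn : 1 ≤ n)
    (Q : MvPolynomial (Fin n) k) (hQ : Q ≠ 0) :
    {x : Fin n → k | MvPolynomial.eval x Q ≠ 0}.Infinite := by
  by_contra h
  rw [Set.not_infinite] at h
  set i0 : Fin n := ⟨0, hn⟩
  set Q' : MvPolynomial (Fin n) k :=
    Q * ∏ y ∈ h.toFinset, (MvPolynomial.X i0 - MvPolynomial.C (y i0)) with hQ'
  have hzero : ∀ x : Fin n → k, MvPolynomial.eval x Q' = 0 := by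
    intro x
    by_cases hx : MvPolynomial.eval x Q = 0
    · simp [hQ', hx]
    · have hx' : x ∈ h.toFinset := by simpa using hx
      rw [hQ', map_mul, map_prod]
      rw [Finset.prod_eq_zero hx' (by simp)]
      ring
  have : Q' = 0 := by
    apply MvPolynomial.funext
    intro x
    simp [hzero x]
  have hfac : ∀ y : Fin n → k,
      (MvPolynomial.X i0 - MvPolynomial.C (y i0) : MvPolynomial (Fin n) k) ≠ 0 := by
    intro y hy
    have := congrArg (MvPolynomial.eval (fun _ => y i0 + 1)) hy
    simp at this
  rw [hQ'] at this
  rcases mul_eq_zero.mp this with h1 | h1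
  · exact hQ h1
  · exact (Finset.prod_ne_zero_iff.mpr fun y _ => hfac y) h1

/-- The main theorem for countable infinite fields, by enumerating the (countably many)
nonzero polynomials and choosing points one at a time. -/
lemma aux_countable (k : Type*) [Field k] [Infinite k] [Countable k] {n : ℕ} (hn : 1 ≤ n) :
    ∃ Γ : Set (Fin n → k), Γ.Infinite ∧
      ∀ P : MvPolynomial (Fin n) k, P ≠ 0 →
        {x ∈ Γ | MvPolynomial.eval x P = 0}.Finite := by
  classical
  have : Countable (MvPolynomial (Fin n) k) :=
    Function.Injective.countable (f := (AddMonoidAlgebra.coeff : AddMonoidAlgebra k (Fin n →₀ ℕ) → _))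
      AddMonoidAlgebra.coeff_injective
  have hne : Nonempty {P : MvPolynomial (Fin n) k // P ≠ 0} := ⟨1, one_ne_zero⟩
  obtain ⟨f, hf⟩ := exists_surjective_nat {P : MvPolynomial (Fin n) k // P ≠ 0}
  set Pr : ℕ × (Fin n → k) → Prop :=
    fun a => MvPolynomial.eval a.2 (∏ j ∈ Finset.range a.1, (f j).1) ≠ 0 with hPr
  set r : ℕ × (Fin n → k) → ℕ × (Fin n → k) → Prop :=
    fun a b => a.1 < b.1 ∧ a.2 ≠ b.2 with hr
  have hstep : ∀ s : Finset (ℕ × (Fin n → k)), (∀ a ∈ s, Pr a) → ∃ b, Pr b ∧ ∀ a ∈ s, r a b := by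
    intro s _
    set m' : ℕ := (s.sup Prod.fst) + 1 with hm'
    have hQ : (∏ j ∈ Finset.range m', (f j).1) ≠ 0 :=
      Finset.prod_ne_zero_iff.mpr fun j _ => (f j).2
    have hinf := (aux_inf k hn _ hQ).diff ((s.finite_toSet.image Prod.snd))
    obtain ⟨x, hx1, hx2⟩ := hinf.nonempty
    refine ⟨(m', x), hx1, fun a ha => ⟨?_, ?_⟩⟩
    · exact lt_of_le_of_lt (Finset.le_sup ha) (Nat.lt_succ_self _)
    · intro he
      exact hx2 ⟨a, ha, he⟩
  obtain ⟨g, hgP, hgr⟩ := exists_seq_of_forall_finset_exists Pr r hstep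
  set Γ : Set (Fin n → k) := Set.range (fun i => (g i).2) with hΓ
  have hginj : Function.Injective (fun i => (g i).2) := by
    intro i j hij
    by_contra hn'
    rcases Ne.lt_or_gt hn' with h' | h'
    · exact (hgr i j h').2 hij
    · exact (hgr j i h').2 hij.symm
  have hmono : StrictMono (fun i => (g i).1) := fun i j h => (hgr i j h).1
  refine ⟨Γ, Set.infinite_range_of_injective hginj, fun P hP => ?_⟩
  obtain ⟨j, hj⟩ := hf ⟨P, hP⟩
  have hsub : {x ∈ Γ | MvPolynomial.eval x P = 0} ⊆
      (fun i => (g i).2) '' (Set.Iic j) := by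
    rintro x ⟨⟨i, rfl⟩, hx0⟩
    refine ⟨i, ?_, rfl⟩
    by_contra hij
    simp only [Set.mem_Iic, not_le] at hij
    have hji : j < (g i).1 := lt_of_lt_of_le hij ((hmono.le_apply))
    have hp := hgP i
    rw [hPr] at hp
    apply hp
    rw [map_prod]
    apply Finset.prod_eq_zero (Finset.mem_range.mpr hji)
    show MvPolynomial.eval (g i).2 ((f j).1) = 0
    rw [hj]
    exact hx0
  exact ((Set.finite_Iic j).image _).subset hsub

set_option synthInstance.maxHeartbeats 400000 in
/-- Let `k` be an infinite field and `n ≥ 1`. Then there is an infinite subset `Γ ⊆ kⁿ`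
meeting the zero locus of every nonzero polynomial `P ∈ k[X₁,…,Xₙ]` in only finitely
many points. -/
theorem exists_infinite_nondegenerate_set_field (k : Type*) [Field k] [Infinite k]
    {n : ℕ} (hn : 1 ≤ n) :
    ∃ Γ : Set (Fin n → k), Γ.Infinite ∧
      ∀ P : MvPolynomial (Fin n) k, P ≠ 0 →
        {x ∈ Γ | MvPolynomial.eval x P = 0}.Finite := by
  classical
  -- a countably infinite subfield
  set ι : ℕ ↪ k := Infinite.natEmbedding k
  set F : Subfield k := Subfield.closure (Set.range ι) with hF
  have hFcount : Countable F := by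
    rw [← Cardinal.mk_le_aleph0_iff]
    refine (Subfield.cardinalMk_closure_le_max _).trans ?_
    have : Countable (Set.range ι) := (Set.countable_range ι).to_subtype
    exact max_le Cardinal.mk_le_aleph0 le_rfl
  have hFinf : Infinite F := by
    refine Infinite.of_injective (fun m => (⟨ι m, Subfield.subset_closure ⟨m, rfl⟩⟩ : F)) ?_
    intro a b hab
    exact ι.injective (congrArg Subtype.val hab)
  obtain ⟨Γ₀, hΓ₀inf, hΓ₀⟩ := aux_countable F hn
  set ι' : (Fin n → F) → (Fin n → k) := fun x i => (x i : k) with hι'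
  have hι'inj : Function.Injective ι' := by
    intro a b hab
    funext i
    exact Subtype.val_injective (congrFun hab i)
  refine ⟨ι' '' Γ₀, hΓ₀inf.image (hι'inj.injOn), fun P hP => ?_⟩
  -- find a coefficient functional
  obtain ⟨d, hd⟩ := MvPolynomial.ne_zero_iff.mp hP
  obtain ⟨φ, hφ⟩ : ∃ φ : Module.Dual F k, φ (MvPolynomial.coeff d P) ≠ 0 := by
    by_contra h
    push_neg at h
    exact hd ((Module.forall_dual_apply_eq_zero_iff F _).mp h)
  set Q : MvPolynomial (Fin n) F :=
    ∑ m ∈ P.support, MvPolynomial.monomial m (φ (MvPolynomial.coeff m P)) with hQdef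
  have hQcoeff : ∀ m, MvPolynomial.coeff m Q = φ (MvPolynomial.coeff m P) := by
    intro m
    rw [hQdef, MvPolynomial.coeff_sum]
    by_cases hm : m ∈ P.support
    · rw [Finset.sum_eq_single m (fun b _ hbm => by rw [MvPolynomial.coeff_monomial, if_neg hbm])
        (fun h => absurd hm h)]
      rw [MvPolynomial.coeff_monomial, if_pos rfl]
    · rw [Finset.sum_eq_zero, MvPolynomial.notMem_support_iff.mp hm, map_zero]
      intro b hb
      rw [MvPolynomial.coeff_monomial, if_neg]
      rintro rfl
      exact hm hb
  have hQne : Q ≠ 0 := fun h => hφ (by rw [← hQcoeff, h, MvPolynomial.coeff_zero])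
  have hkey : ∀ x : Fin n → F, φ (MvPolynomial.eval (ι' x) P) = MvPolynomial.eval x Q := by
    intro x
    rw [MvPolynomial.eval_eq, map_sum]
    rw [hQdef, map_sum]
    apply Finset.sum_congr rfl
    intro m _
    rw [MvPolynomial.eval_monomial]
    have hcast : (∏ i ∈ m.support, (ι' x) i ^ m i)
        = ((m.prod fun i e => x i ^ e : F) : k) := by
      rw [Finsupp.prod]
      push_cast
      rfl
    rw [hcast]
    have : MvPolynomial.coeff m P * ((m.prod fun i e => x i ^ e : F) : k)
        = (m.prod fun i e => x i ^ e) • MvPolynomial.coeff m P := mul_comm _ _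
    rw [this, map_smul, smul_eq_mul, mul_comm]
  have hsub : {x ∈ ι' '' Γ₀ | MvPolynomial.eval x P = 0} ⊆
      ι' '' {y ∈ Γ₀ | MvPolynomial.eval y Q = 0} := by
    rintro x ⟨⟨y, hy, rfl⟩, hx0⟩
    refine ⟨y, ⟨hy, ?_⟩, rfl⟩
    rw [← hkey, hx0, map_zero]
  exact ((hΓ₀ Q hQne).image _).subset hsub
end
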